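/- arXiv:2407.13045 — 3 statements merged into one kernel-verified Lean document; each statement's English description precedes it below -/
import Mathlib

section
/- (Dynamic Programming Principle, monotonicity part) For every φ ∈ L²(μ,Ω;ℝⁿ), every 0 ≤ s₁ ≤ s₂ ≤ T, and every admissible control u on [s₁, s₂], the value function satisfies V(s₁, φ) ≤ V(s₂, x_{φ,u}(s₂, ·)), where x_{φ,u} is the trajectory starting from φ at time s₁ driven by u. -/
open MeasureTheory Set Metric

/-- An admissible process `(x, u)` on `[s, T]` for the average control problem:
`u` is measurable, takes values in `U t` for a.e. `t ∈ [s,T]`, and `x` satisfies the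
integral equation `x(t,ω) = φ(ω) + ∫_s^t f(σ, x(σ,ω), u(σ), ω) dσ` on `[s,T]`. -/
def IsProcess {n m : ℕ} {Ω : Type*} [MeasurableSpace Ω]
    (f : ℝ → EuclideanSpace ℝ (Fin n) → EuclideanSpace ℝ (Fin m) → Ω →
      EuclideanSpace ℝ (Fin n))
    (U : ℝ → Set (EuclideanSpace ℝ (Fin m))) (s T : ℝ)
    (φ : Ω → EuclideanSpace ℝ (Fin n))
    (x : ℝ → Ω → EuclideanSpace ℝ (Fin n))
    (u : ℝ → EuclideanSpace ℝ (Fin m)) : Prop :=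
  Measurable u ∧ (∀ᵐ t ∂(volume.restrict (Icc s T)), u t ∈ U t) ∧
    ∀ t ∈ Icc s T, ∀ ω, x t ω = φ ω + ∫ σ in Ioc s t, f σ (x σ ω) (u σ) ω

/-- The terminal cost functional `𝒥(ψ) = ∫_Ω g(ψ(ω), ω) dμ(ω)`. -/
noncomputable def termCost {n : ℕ} {Ω : Type*} [MeasurableSpace Ω] (μ : Measure Ω)
    (g : EuclideanSpace ℝ (Fin n) → Ω → ℝ)
    (ψ : Ω → EuclideanSpace ℝ (Fin n)) : ℝ :=
  ∫ ω, g (ψ ω) ω ∂μ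

/-- The value function `V(s,φ)`: infimum of the average terminal cost over all
admissible processes on `[s,T]` starting from `φ` at time `s`. -/
noncomputable def valueFn {n m : ℕ} {Ω : Type*} [MeasurableSpace Ω] (μ : Measure Ω)
    (f : ℝ → EuclideanSpace ℝ (Fin n) → EuclideanSpace ℝ (Fin m) → Ω →
      EuclideanSpace ℝ (Fin n))
    (U : ℝ → Set (EuclideanSpace ℝ (Fin m)))
    (g : EuclideanSpace ℝ (Fin n) → Ω → ℝ) (T s : ℝ)
    (φ : Ω → EuclideanSpace ℝ (Fin n)) : ℝ :=
  sInf { r | ∃ x u, IsProcess f U s T φ x u ∧ r = termCost μ g (x T) }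

/-- Carathéodory joint measurability: composition is measurable. -/
lemma caratheodory_meas {n m : ℕ} {Ω : Type*} [MeasurableSpace Ω]
    (f : ℝ → EuclideanSpace ℝ (Fin n) → EuclideanSpace ℝ (Fin m) → Ω →
      EuclideanSpace ℝ (Fin n))
    (hfmeas : ∀ x u ω, Measurable fun t => f t x u ω)
    (hfcont : ∀ t ω, Continuous fun p : EuclideanSpace ℝ (Fin n) × EuclideanSpace ℝ (Fin m) =>
      f t p.1 p.2 ω)
    (ω : Ω) {w : ℝ → EuclideanSpace ℝ (Fin n)} {v : ℝ → EuclideanSpace ℝ (Fin m)}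
    (hw : Measurable w) (hv : Measurable v) :
    Measurable fun σ => f σ (w σ) (v σ) ω := by
  have H := measurable_uncurry_of_continuous_of_measurable
    (u := fun (p : EuclideanSpace ℝ (Fin n) × EuclideanSpace ℝ (Fin m)) (t : ℝ) =>
      f t p.1 p.2 ω)
    (fun t => hfcont t ω) (fun p => hfmeas p.1 p.2 ω)
  exact H.comp ((hw.prodMk hv).prodMk measurable_id)

/-- Integral form of Gronwall's inequality. -/
lemma gron_integral {E : Type*} [NormedAddCommGroup E] [NormedSpace ℝ E] [CompleteSpace E]
    {c s e : ℝ} (hc : 0 < c) (hse : s ≤ e) (ψ : E) (y G : ℝ → E)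
    (hy : ∀ t ∈ Icc s e, y t = ψ + ∫ σ in Ioc s t, G σ)
    (hGint : IntegrableOn G (Ioc s e) volume)
    (hGle : ∀ σ ∈ Ioc s e, ‖G σ‖ ≤ c * (1 + ‖y σ‖)) :
    ∀ t ∈ Icc s e, ‖y t‖ ≤ (1 + ‖ψ‖) * Real.exp (c * (e - s)) := by
  have hIcc : IntegrableOn G (Icc s e) volume := (integrableOn_Icc_iff_integrableOn_Ioc (by simp)).2 hGint
  have ycont : ContinuousOn y (Icc s e) := by
    refine ContinuousOn.congr (f := fun t => ψ + ∫ σ in Ioc s t, G σ)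
      (continuous_const.continuousOn.add (intervalIntegral.continuousOn_primitive hIcc)) ?_
    intro t ht; exact hy t ht
  have hYcont : Continuous (fun σ => y (projIcc s e hse σ)) :=
    ycont.restrict.comp continuous_projIcc
  set Y : ℝ → E := fun σ => y (projIcc s e hse σ) with hYdef
  have hYeq : ∀ σ ∈ Icc s e, Y σ = y σ := by
    intro σ hσ; simp only [hYdef, projIcc_of_mem hse hσ]
  have hhcont : Continuous (fun σ => 1 + ‖Y σ‖) := continuous_const.add hYcont.norm
  have hhnn : ∀ σ, 0 ≤ 1 + ‖Y σ‖ := fun σ => by positivity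
  set v : ℝ → ℝ := fun t => ∫ σ in s..t, (1 + ‖Y σ‖) with hvdef
  have hv' : ∀ t, HasDerivAt v (1 + ‖Y t‖) t := by
    intro t
    exact intervalIntegral.integral_hasDerivAt_right (hhcont.intervalIntegrable _ _)
      (hhcont.stronglyMeasurableAtFilter _ _) hhcont.continuousAt
  have hvnn : ∀ t ∈ Icc s e, 0 ≤ v t := by
    intro t ht
    exact intervalIntegral.integral_nonneg ht.1 (fun σ _ => hhnn σ)
  have key : ∀ t ∈ Icc s e, ‖y t‖ ≤ ‖ψ‖ + c * v t := by
    intro t ht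
    have h1 : ‖y t‖ ≤ ‖ψ‖ + ‖∫ σ in Ioc s t, G σ‖ := by
      rw [hy t ht]; exact norm_add_le _ _
    have h2 : ‖∫ σ in Ioc s t, G σ‖ ≤ ∫ σ in Ioc s t, ‖G σ‖ :=
      norm_integral_le_integral_norm _
    have hsub : Ioc s t ⊆ Ioc s e := Ioc_subset_Ioc_right ht.2
    have h3 : ∫ σ in Ioc s t, ‖G σ‖ ≤ ∫ σ in Ioc s t, c * (1 + ‖Y σ‖) := by
      refine setIntegral_mono_on ((hGint.mono_set hsub).norm)
        ((hhcont.const_smul c).integrableOn_Ioc) measurableSet_Ioc ?_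
      intro σ hσ
      have hσe : σ ∈ Ioc s e := hsub hσ
      have hb : ‖G σ‖ ≤ c * (1 + ‖y σ‖) := hGle σ hσe
      rwa [← hYeq σ ⟨le_of_lt hσ.1, hσ.2.trans ht.2⟩] at hb
    have h4 : ∫ σ in Ioc s t, c * (1 + ‖Y σ‖) = c * v t := by
      show _ = c * ∫ σ in s..t, (1 + ‖Y σ‖)
      rw [intervalIntegral.integral_of_le ht.1]
      exact integral_const_mul c _
    linarith [h1, h2, h3.trans_eq h4]
  have gb := norm_le_gronwallBound_of_norm_deriv_right_le
    (f := v) (f' := fun t => 1 + ‖Y t‖) (δ := 0) (K := c) (ε := 1 + ‖ψ‖) (a := s) (b := e)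
    (fun t _ => (hv' t).continuousAt.continuousWithinAt)
    (fun t _ => (hv' t).hasDerivWithinAt)
    (by simp [hvdef])
    (by
      intro t ht
      have htc : t ∈ Icc s e := ⟨ht.1, le_of_lt ht.2⟩
      have h5 : (1 : ℝ) + ‖Y t‖ = 1 + ‖y t‖ := by rw [hYeq t htc]
      have h6 : ‖y t‖ ≤ ‖ψ‖ + c * v t := key t htc
      have h7 : ‖v t‖ = v t := Real.norm_of_nonneg (hvnn t htc)
      rw [Real.norm_of_nonneg (hhnn t), h5, h7]; linarith)
  intro t ht
  have h8 := gb t ht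
  rw [Real.norm_of_nonneg (hvnn t ht), gronwallBound_of_K_ne_0 hc.ne'] at h8
  have h8' : v t ≤ (1 + ‖ψ‖) / c * (Real.exp (c * (t - s)) - 1) := by simpa using h8
  have h9 := key t ht
  have hexp : Real.exp (c * (t - s)) ≤ Real.exp (c * (e - s)) := by
    apply Real.exp_le_exp.2
    have := ht.2; nlinarith
  have hψ : (0:ℝ) ≤ 1 + ‖ψ‖ := by positivity
  have h10 : c * v t ≤ (1 + ‖ψ‖) * (Real.exp (c * (t - s)) - 1) := by
    calc c * v t ≤ c * ((1 + ‖ψ‖) / c * (Real.exp (c * (t - s)) - 1)) := by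
          apply mul_le_mul_of_nonneg_left h8' hc.le
      _ = (1 + ‖ψ‖) * (Real.exp (c * (t - s)) - 1) := by field_simp
  nlinarith [h9, h10, mul_le_mul_of_nonneg_left hexp hψ]

/-- Regularity of any solution of the integral equation: the composed integrand is
automatically integrable on the whole interval, and the solution satisfies the
Gronwall bound. -/
lemma process_reg {E : Type*} [NormedAddCommGroup E] [NormedSpace ℝ E] [CompleteSpace E]
    {c s e : ℝ} (hc : 0 < c) (hse : s ≤ e) (ψ : E) (F : ℝ → E → E) (y : ℝ → E)
    (hFc : AEStronglyMeasurable (fun σ => F σ ψ) (volume.restrict (Ioc s e)))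
    (hFg : ∀ σ p, ‖F σ p‖ ≤ c * (1 + ‖p‖))
    (hy : ∀ t ∈ Icc s e, y t = ψ + ∫ σ in Ioc s t, F σ (y σ)) :
    IntegrableOn (fun σ => F σ (y σ)) (Ioc s e) volume ∧
      ∀ t ∈ Icc s e, ‖y t‖ ≤ (1 + ‖ψ‖) * Real.exp (c * (e - s)) := by
  set G : ℝ → E := fun σ => F σ (y σ) with hGdef
  set A : Set ℝ := Icc s e ∩ {t | IntegrableOn G (Ioc s t) volume} with hAdef
  have hsA : s ∈ A := by
    constructor
    · exact ⟨le_refl s, hse⟩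
    · show IntegrableOn G (Ioc s s) volume
      simp [Set.Ioc_self]
  have hdown : ∀ t ∈ A, ∀ t', s ≤ t' → t' ≤ t → t' ∈ A := by
    intro t ht t' h1 h2
    exact ⟨⟨h1, h2.trans ht.1.2⟩, ht.2.mono_set (Ioc_subset_Ioc_right h2)⟩
  have hAne : A.Nonempty := ⟨s, hsA⟩
  have hAbdd : BddAbove A := ⟨e, fun t ht => ht.1.2⟩
  set τ : ℝ := sSup A with hτdef
  have hsτ : s ≤ τ := le_csSup hAbdd hsA
  have hτe : τ ≤ e := csSup_le hAne (fun t ht => ht.1.2)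
  set B : ℝ := (1 + ‖ψ‖) * Real.exp (c * (e - s)) with hBdef
  -- Gronwall bound on each interval where integrability is known
  have hboundA : ∀ t ∈ A, ∀ σ ∈ Icc s t, ‖y σ‖ ≤ B := by
    intro t ht σ hσ
    have hsubI : Icc s t ⊆ Icc s e := Icc_subset_Icc_right ht.1.2
    have hgr := gron_integral hc ht.1.1 ψ y G
      (fun τ' hτ' => hy τ' (hsubI hτ')) ht.2
      (fun σ' hσ' => hFg σ' (y σ'))
      σ hσ
    refine hgr.trans ?_
    rw [hBdef]
    have : Real.exp (c * (t - s)) ≤ Real.exp (c * (e - s)) := by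
      apply Real.exp_le_exp.2
      have h1 := ht.1.2
      nlinarith
    have hψ : (0:ℝ) ≤ 1 + ‖ψ‖ := by positivity
    nlinarith
  -- the supremum τ belongs to A
  have hτA : τ ∈ A := by
    rcases eq_or_lt_of_le hsτ with heq | hlt
    · rw [← heq]; exact hsA
    · -- AESM of G on Ioo s τ via countable union
      have hless : ∀ σ, s ≤ σ → σ < τ → σ ∈ A := by
        intro σ h1 h2
        obtain ⟨t, htA, hσt⟩ := exists_lt_of_lt_csSup hAne h2
        exact hdown t htA σ h1 (le_of_lt hσt)
      have hunion : Ioo s τ = ⋃ nn : ℕ, Ioc s (τ - (τ - s) / (nn + 1)) := by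
        ext σ
        simp only [mem_Ioo, mem_iUnion, mem_Ioc]
        constructor
        · rintro ⟨h1, h2⟩
          have hpos : 0 < (τ - σ) / (τ - s) := by
            apply div_pos <;> linarith
          obtain ⟨nn, hnn⟩ := exists_nat_one_div_lt hpos
          refine ⟨nn, h1, ?_⟩
          have hts : 0 < τ - s := by linarith
          have hchain : (τ - s) / (nn + 1 : ℝ) ≤ τ - σ := by
            have heq : (τ - s) / (nn + 1 : ℝ) = (τ - s) * (1 / (nn + 1)) := by ring
            rw [heq]
            calc (τ - s) * (1 / (nn + 1 : ℝ)) ≤ (τ - s) * ((τ - σ) / (τ - s)) := by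
                  apply mul_le_mul_of_nonneg_left (le_of_lt hnn) (le_of_lt hts)
              _ = τ - σ := by field_simp
          linarith
        · rintro ⟨nn, h1, h2⟩
          have hts : 0 < τ - s := by linarith
          have : 0 < (τ - s) / (nn + 1 : ℝ) := by positivity
          exact ⟨h1, by linarith⟩
      have hmemA : ∀ nn : ℕ, τ - (τ - s) / (nn + 1) ∈ A := by
        intro nn
        have hts : 0 < τ - s := by linarith
        have h1 : (τ - s) / (nn + 1 : ℝ) ≤ τ - s := by
          apply div_le_self (le_of_lt hts)
          have : (0:ℝ) ≤ nn := Nat.cast_nonneg nn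
          linarith
        have h2 : 0 < (τ - s) / (nn + 1 : ℝ) := by positivity
        exact hless _ (by linarith) (by linarith)
      have hmeasIoo : AEStronglyMeasurable G (volume.restrict (Ioo s τ)) := by
        rw [hunion]
        rw [aestronglyMeasurable_iUnion_iff]
        intro nn
        exact ((hmemA nn).2).aestronglyMeasurable
      have hIooIoc : volume.restrict (Ioo s τ) = volume.restrict (Ioc s τ) :=
        Measure.restrict_congr_set Ioo_ae_eq_Ioc
      have hmeasIoc : AEStronglyMeasurable G (volume.restrict (Ioc s τ)) := by
        rwa [hIooIoc] at hmeasIoo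
      have hbdd : ∀ᵐ σ ∂(volume.restrict (Ioc s τ)), ‖G σ‖ ≤ c * (1 + B) := by
        rw [← hIooIoc]
        filter_upwards [ae_restrict_mem measurableSet_Ioo] with σ hσ
        have hσA : σ ∈ A := hless σ (le_of_lt hσ.1) hσ.2
        have hyb : ‖y σ‖ ≤ B := hboundA σ hσA σ ⟨le_of_lt hσ.1, le_refl σ⟩
        calc ‖G σ‖ ≤ c * (1 + ‖y σ‖) := hFg σ (y σ)
          _ ≤ c * (1 + B) := by nlinarith
      refine ⟨⟨hsτ, hτe⟩, ?_⟩
      show IntegrableOn G (Ioc s τ) volume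
      refine Integrable.mono' (g := fun _ => c * (1 + B)) ?_ hmeasIoc hbdd
      exact integrableOn_const measure_Ioc_lt_top.ne
  -- τ = e
  have hτeq : τ = e := by
    by_contra hne
    have hlt : τ < e := lt_of_le_of_ne hτe hne
    have hnotint : ∀ t, τ < t → t ≤ e → ¬ IntegrableOn G (Ioc s t) volume := by
      intro t h1 h2 hint
      have : t ∈ A := ⟨⟨hsτ.trans (le_of_lt h1), h2⟩, hint⟩
      have := le_csSup hAbdd this
      linarith
    have hyconst : ∀ t, τ < t → t ≤ e → y t = ψ := by
      intro t h1 h2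
      have heq := hy t ⟨hsτ.trans (le_of_lt h1), h2⟩
      rw [heq, integral_undef (hnotint t h1 h2), add_zero]
    have hint2 : IntegrableOn G (Ioc τ e) volume := by
      have hconst : IntegrableOn (fun σ => F σ ψ) (Ioc τ e) volume := by
        refine Integrable.mono' (g := fun _ => c * (1 + ‖ψ‖)) ?_
          (hFc.mono_measure (Measure.restrict_mono (Ioc_subset_Ioc_left hsτ) le_rfl)) ?_
        · exact integrableOn_const measure_Ioc_lt_top.ne
        · exact Filter.Eventually.of_forall (fun σ => hFg σ ψ)
      refine hconst.congr_fun ?_ measurableSet_Ioc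
      intro σ hσ
      show F σ ψ = F σ (y σ)
      rw [hyconst σ hσ.1 hσ.2]
    have : IntegrableOn G (Ioc s e) volume := by
      rw [← Ioc_union_Ioc_eq_Ioc hsτ hτe]
      exact integrableOn_union.2 ⟨hτA.2, hint2⟩
    exact hnotint e hlt (le_refl e) this
  have hfin : IntegrableOn G (Ioc s e) volume := by rw [← hτeq]; exact hτA.2
  refine ⟨hfin, ?_⟩
  exact gron_integral hc hse ψ y G hy hfin (fun σ' _ => hFg σ' (y σ'))

/-- Measurable selection for an upper semicontinuous compact-nonempty-valued multifunction. -/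
lemma meas_selection {m : ℕ} (U : ℝ → Set (EuclideanSpace ℝ (Fin m)))
    (hUcpt : ∀ t, IsCompact (U t)) (hUne : ∀ t, (U t).Nonempty)
    (hUusc : ∀ F : Set (EuclideanSpace ℝ (Fin m)), IsClosed F →
      IsClosed {t : ℝ | (U t ∩ F).Nonempty}) :
    ∃ u : ℝ → EuclideanSpace ℝ (Fin m), Measurable u ∧ ∀ t, u t ∈ U t := by
  classical
  set e : ℕ → EuclideanSpace ℝ (Fin m) := TopologicalSpace.denseSeq _ with hedef
  have hdense : DenseRange e := TopologicalSpace.denseRange_denseSeq _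
  set d : ℝ → EuclideanSpace ℝ (Fin m) → ℝ := fun t q => infDist q (U t) with hddef
  have hd : ∀ q, Measurable fun t => d t q := by
    intro q
    apply measurable_of_Iic
    intro r
    rcases le_or_gt 0 r with hr | hr
    · have : (fun t => d t q) ⁻¹' Iic r = {t | (U t ∩ closedBall q r).Nonempty} := by
        ext t
        simp only [mem_preimage, mem_Iic, mem_setOf_eq]
        constructor
        · intro hle
          obtain ⟨p, hp, hdq⟩ := (hUcpt t).exists_infDist_eq_dist (hUne t) q
          refine ⟨p, hp, ?_⟩
          rw [Metric.mem_closedBall, dist_comm]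
          rw [hddef] at hle; simp only at hle
          rw [hdq] at hle; exact hle
        · rintro ⟨p, hpU, hpb⟩
          have : infDist q (U t) ≤ dist q p := infDist_le_dist_of_mem hpU
          rw [Metric.mem_closedBall, dist_comm] at hpb
          exact this.trans hpb
      rw [this]
      exact (hUusc (closedBall q r) Metric.isClosed_closedBall).measurableSet
    · have : (fun t => d t q) ⁻¹' Iic r = ∅ := by
        ext t
        simp only [mem_preimage, mem_Iic, mem_empty_iff_false, iff_false, not_le]
        exact lt_of_lt_of_le hr infDist_nonneg
      rw [this]; exact MeasurableSet.empty
  -- the approximating sequence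
  set C : ℕ → (ℝ → EuclideanSpace ℝ (Fin m)) → ℝ → Prop :=
    fun nn w t => ∃ i, d t (e i) < (1/2)^(nn+1) ∧ dist (e i) (w t) < 3 * (1/2)^(nn+1)
    with hCdef
  set v : ℕ → ℝ → EuclideanSpace ℝ (Fin m) := fun nn => Nat.rec
    (fun t => if h : ∃ i, d t (e i) < 1 then e (Nat.find h) else e 0)
    (fun nn w t => if h : C nn w t then e (Nat.find h) else w t) nn with hvdef
  have hv0 : ∀ t, v 0 t = if h : ∃ i, d t (e i) < 1 then e (Nat.find h) else e 0 := fun t => rfl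
  have hvs : ∀ nn t, v (nn+1) t = if h : C nn (v nn) t then e (Nat.find h) else v nn t :=
    fun nn t => rfl
  -- existence of good approximations
  have hc0 : ∀ t, ∃ i, d t (e i) < 1 := by
    intro t
    obtain ⟨p, hp⟩ := hUne t
    obtain ⟨i, hi⟩ := hdense.exists_dist_lt p (by norm_num : (0:ℝ) < 1)
    refine ⟨i, lt_of_le_of_lt (infDist_le_dist_of_mem hp) ?_⟩
    rwa [dist_comm]
  have hstep : ∀ nn, (∀ t, d t (v nn t) < (1/2)^nn) → ∀ t, C nn (v nn) t := by
    intro nn hinv t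
    obtain ⟨p, hpU, hpd⟩ := (infDist_lt_iff (hUne t)).1 (hinv t)
    obtain ⟨i, hi⟩ := hdense.exists_dist_lt p (by positivity : (0:ℝ) < (1/2)^(nn+1))
    refine ⟨i, ?_, ?_⟩
    · calc d t (e i) ≤ dist (e i) p := infDist_le_dist_of_mem hpU
        _ < (1/2)^(nn+1) := by rwa [dist_comm]
    · calc dist (e i) (v nn t) ≤ dist (e i) p + dist p (v nn t) := dist_triangle _ _ _
        _ < (1/2)^(nn+1) + (1/2)^nn :=
            add_lt_add (by rwa [dist_comm]) (by rwa [dist_comm])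
        _ = 3 * (1/2)^(nn+1) := by ring
  -- invariant
  have hinv : ∀ nn, ∀ t, d t (v nn t) < (1/2)^nn := by
    intro nn
    induction nn with
    | zero =>
      intro t
      rw [hv0 t, dif_pos (hc0 t)]
      simpa using Nat.find_spec (hc0 t)
    | succ nn ih =>
      intro t
      rw [hvs nn t, dif_pos (hstep nn ih t)]
      exact (Nat.find_spec (hstep nn ih t)).1
  have hdist : ∀ nn t, dist (v nn t) (v (nn+1) t) ≤ 3 * (1/2)^(nn+1) := by
    intro nn t
    rw [hvs nn t, dif_pos (hstep nn (hinv nn) t), dist_comm]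
    exact le_of_lt (Nat.find_spec (hstep nn (hinv nn) t)).2
  -- measurability by induction
  have hmeas : ∀ nn, Measurable (v nn) := by
    intro nn
    induction nn with
    | zero =>
      have : v 0 = fun t => e (if h : ∃ i, d t (e i) < 1 then Nat.find h else 0) := by
        funext t
        rw [hv0 t, dif_pos (hc0 t), dif_pos (hc0 t)]
      rw [this]
      apply measurable_from_top.comp
      apply measurable_to_countable'
      intro i
      have : (fun t => if h : ∃ i, d t (e i) < 1 then Nat.find h else 0) ⁻¹' {i} =
          {t | d t (e i) < 1} ∩ ⋂ j, ⋂ _ : j < i, {t | d t (e j) < 1}ᶜ := by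
        ext t
        simp only [mem_preimage, mem_singleton_iff, dif_pos (hc0 t), Nat.find_eq_iff (hc0 t),
          mem_inter_iff, mem_setOf_eq, mem_iInter, mem_compl_iff]
      rw [this]
      exact (measurableSet_lt (hd (e i)) measurable_const).inter
        (MeasurableSet.iInter fun j => MeasurableSet.iInter fun _ =>
          (measurableSet_lt (hd (e j)) measurable_const).compl)
    | succ nn ih =>
      have hCall : ∀ t, C nn (v nn) t := hstep nn (hinv nn)
      have : v (nn+1) = fun t => e (if h : C nn (v nn) t then Nat.find h else 0) := by
        funext t
        rw [hvs nn t, dif_pos (hCall t), dif_pos (hCall t)]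
      rw [this]
      apply measurable_from_top.comp
      apply measurable_to_countable'
      intro i
      have hcond : ∀ j, MeasurableSet {t | d t (e j) < (1/2)^(nn+1) ∧
          dist (e j) (v nn t) < 3 * (1/2)^(nn+1)} := by
        intro j
        apply MeasurableSet.inter
        · exact measurableSet_lt (hd (e j)) measurable_const
        · exact measurableSet_lt ((continuous_const.dist continuous_id).measurable.comp ih)
            measurable_const
      have : (fun t => if h : C nn (v nn) t then Nat.find h else 0) ⁻¹' {i} =
          {t | d t (e i) < (1/2)^(nn+1) ∧ dist (e i) (v nn t) < 3 * (1/2)^(nn+1)} ∩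
            ⋂ j, ⋂ _ : j < i, {t | d t (e j) < (1/2)^(nn+1) ∧
              dist (e j) (v nn t) < 3 * (1/2)^(nn+1)}ᶜ := by
        ext t
        simp only [mem_preimage, mem_singleton_iff, dif_pos (hCall t), Nat.find_eq_iff (hCall t)]
        simp only [hCdef, mem_inter_iff, mem_setOf_eq, mem_iInter, mem_compl_iff]
      rw [this]
      exact (hcond i).inter
        (MeasurableSet.iInter fun j => MeasurableSet.iInter fun _ => (hcond j).compl)
  -- Cauchy and limit
  have hCauchy : ∀ t, CauchySeq fun nn => v nn t := by
    intro t
    apply cauchySeq_of_le_geometric (1/2) (3/2) (by norm_num)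
    intro nn
    calc dist (v nn t) (v (nn+1) t) ≤ 3 * (1/2)^(nn+1) := hdist nn t
      _ = 3/2 * (1/2)^nn := by ring
  choose w hw using fun t => cauchySeq_tendsto_of_complete (hCauchy t)
  refine ⟨w, ?_, ?_⟩
  · exact measurable_of_tendsto_metrizable hmeas (tendsto_pi_nhds.2 hw)
  · intro t
    have h1 : Filter.Tendsto (fun nn => d t (v nn t)) Filter.atTop (nhds (d t (w t))) :=
      ((continuous_infDist_pt (U t)).tendsto _).comp (hw t)
    have h2 : Filter.Tendsto (fun nn => d t (v nn t)) Filter.atTop (nhds 0) := by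
      apply squeeze_zero (fun nn => infDist_nonneg) (fun nn => le_of_lt (hinv nn t))
      exact tendsto_pow_atTop_nhds_zero_of_lt_one (by norm_num) (by norm_num)
    have : d t (w t) = 0 := tendsto_nhds_unique h1 h2
    exact ((hUcpt t).isClosed.mem_iff_infDist_zero (hUne t)).2 this

/-- Existence of a solution to the controlled integral equation with a measurable control. -/
lemma exists_sol {n m : ℕ} {Ω : Type*} [MeasurableSpace Ω] {c k : ℝ} (hc : 0 < c) (hk : 0 < k)
    (f : ℝ → EuclideanSpace ℝ (Fin n) → EuclideanSpace ℝ (Fin m) → Ω →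
      EuclideanSpace ℝ (Fin n))
    (hfmeas : ∀ x u ω, Measurable fun t => f t x u ω)
    (hfcont : ∀ t ω, Continuous fun p : EuclideanSpace ℝ (Fin n) × EuclideanSpace ℝ (Fin m) =>
      f t p.1 p.2 ω)
    (hgrowth : ∀ t x u ω, ‖f t x u ω‖ ≤ c * (1 + ‖x‖))
    (hLip : ∀ t x x' u ω, ‖f t x u ω - f t x' u ω‖ ≤ k * ‖x - x'‖)
    {s T : ℝ} (hsT : s ≤ T) (u : ℝ → EuclideanSpace ℝ (Fin m)) (hu : Measurable u)
    (ψ : Ω → EuclideanSpace ℝ (Fin n)) :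
    ∃ x : ℝ → Ω → EuclideanSpace ℝ (Fin n),
      ∀ t ∈ Icc s T, ∀ ω, x t ω = ψ ω + ∫ σ in Ioc s t, f σ (x σ ω) (u σ) ω := by
  classical
  suffices h : ∀ ω, ∃ Z : ℝ → EuclideanSpace ℝ (Fin n),
      ∀ t ∈ Icc s T, Z t = ψ ω + ∫ σ in Ioc s t, f σ (Z σ) (u σ) ω by
    choose Z hZ using h
    exact ⟨fun t ω => Z ω t, fun t ht ω => hZ ω t ht⟩
  intro ω
  haveI : Nonempty (Icc s T) := nonempty_Icc_subtype hsT
  have hGmeas : ∀ y : C(Icc s T, EuclideanSpace ℝ (Fin n)),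
      Measurable fun σ => f σ (IccExtend hsT y σ) (u σ) ω := by
    intro y
    exact caratheodory_meas f hfmeas hfcont ω
      ((map_continuous y).comp continuous_projIcc).measurable hu
  have hGint : ∀ y : C(Icc s T, EuclideanSpace ℝ (Fin n)),
      IntegrableOn (fun σ => f σ (IccExtend hsT y σ) (u σ) ω) (Icc s T) volume := by
    intro y
    refine Integrable.mono' (g := fun _ => c * (1 + ‖y‖)) ?_
      ((hGmeas y).aestronglyMeasurable.restrict) ?_
    · exact integrableOn_const measure_Icc_lt_top.ne
    · refine Filter.Eventually.of_forall (fun σ => ?_)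
      show ‖f σ (IccExtend hsT y σ) (u σ) ω‖ ≤ c * (1 + ‖y‖)
      refine (hgrowth σ _ _ ω).trans ?_
      have hle : ‖IccExtend hsT y σ‖ ≤ ‖y‖ := by
        rw [IccExtend]
        exact y.norm_coe_le_norm _
      nlinarith
  set Φ : C(Icc s T, EuclideanSpace ℝ (Fin n)) → C(Icc s T, EuclideanSpace ℝ (Fin n)) :=
    fun y =>
    ⟨fun t => ψ ω + ∫ σ in Ioc s (t : ℝ), f σ (IccExtend hsT y σ) (u σ) ω, by
      apply continuous_const.add
      exact (intervalIntegral.continuousOn_primitive (hGint y)).restrict⟩ with hΦdef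
  have hΦapp : ∀ (y : C(Icc s T, EuclideanSpace ℝ (Fin n))) (t : Icc s T),
      Φ y t = ψ ω + ∫ σ in Ioc s (t : ℝ), f σ (IccExtend hsT y σ) (u σ) ω :=
    fun y t => rfl
  -- the iterate estimate
  have key : ∀ (N : ℕ) (y z : C(Icc s T, EuclideanSpace ℝ (Fin n))) (t : Icc s T),
      dist (Φ^[N] y t) (Φ^[N] z t) ≤ (k * ((t : ℝ) - s))^N / (N.factorial : ℝ) * dist y z := by
    intro N
    induction N with
    | zero =>
      intro y z t
      simpa using ContinuousMap.dist_apply_le_dist (f := y) (g := z) t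
    | succ N ih =>
      intro y z t
      rw [Function.iterate_succ_apply', Function.iterate_succ_apply']
      set a := Φ^[N] y with hadef
      set b := Φ^[N] z with hbdef
      have htmem : (t : ℝ) ∈ Icc s T := t.2
      have hsub : Ioc s (t : ℝ) ⊆ Icc s T := fun σ hσ =>
        ⟨le_of_lt hσ.1, hσ.2.trans htmem.2⟩
      have hInta : IntegrableOn (fun σ => f σ (IccExtend hsT a σ) (u σ) ω)
          (Ioc s (t : ℝ)) volume := (hGint a).mono_set hsub
      have hIntb : IntegrableOn (fun σ => f σ (IccExtend hsT b σ) (u σ) ω)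
          (Ioc s (t : ℝ)) volume := (hGint b).mono_set hsub
      have h1 : dist (Φ a t) (Φ b t) = ‖∫ σ in Ioc s (t : ℝ),
          (f σ (IccExtend hsT a σ) (u σ) ω - f σ (IccExtend hsT b σ) (u σ) ω)‖ := by
        rw [dist_eq_norm, hΦapp, hΦapp, add_sub_add_left_eq_sub, ← integral_sub hInta hIntb]
      rw [h1]
      have h2 : ‖∫ σ in Ioc s (t : ℝ),
          (f σ (IccExtend hsT a σ) (u σ) ω - f σ (IccExtend hsT b σ) (u σ) ω)‖ ≤
          ∫ σ in Ioc s (t : ℝ),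
            (k^(N+1) * dist y z / (N.factorial : ℝ)) * (σ - s)^N := by
        refine (norm_integral_le_integral_norm _).trans ?_
        refine setIntegral_mono_on ((hInta.sub hIntb).norm) ?_ measurableSet_Ioc ?_
        · exact (continuous_const.mul
            ((continuous_id.sub continuous_const).pow N)).integrableOn_Ioc
        · intro σ hσ
          have hσmem : σ ∈ Icc s T := hsub hσ
          have h3 : ‖f σ (IccExtend hsT a σ) (u σ) ω - f σ (IccExtend hsT b σ) (u σ) ω‖ ≤
              k * ‖IccExtend hsT a σ - IccExtend hsT b σ‖ := hLip σ _ _ _ ω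
          have h5 := ih y z ⟨σ, hσmem⟩
          refine h3.trans ?_
          rw [IccExtend_of_mem hsT a hσmem, IccExtend_of_mem hsT b hσmem,
            ← dist_eq_norm]
          calc k * dist (a ⟨σ, hσmem⟩) (b ⟨σ, hσmem⟩) ≤
              k * ((k * (σ - s))^N / (N.factorial : ℝ) * dist y z) :=
                mul_le_mul_of_nonneg_left h5 hk.le
            _ = (k^(N+1) * dist y z / (N.factorial : ℝ)) * (σ - s)^N := by
                rw [mul_pow]; ring
      refine h2.trans ?_
      have h6 : ∫ σ in Ioc s (t : ℝ), (σ - s)^N = ((t : ℝ) - s)^(N+1) / ((N : ℝ)+1) := by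
        rw [← intervalIntegral.integral_of_le htmem.1]
        have hcs := intervalIntegral.integral_comp_sub_right (a := s) (b := (t : ℝ))
          (fun x => x^N) s
        rw [hcs, sub_self, integral_pow, zero_pow (Nat.succ_ne_zero N)]
        push_cast; ring
      rw [integral_const_mul, h6]
      refine le_of_eq ?_
      have hfac : ((N.factorial : ℝ)) ≠ 0 := by positivity
      have hN1 : ((N : ℝ) + 1) ≠ 0 := by positivity
      rw [mul_pow, Nat.factorial_succ]
      push_cast
      field_simp
  -- choose N making the iterate a contraction
  have htend := FloorSemiring.tendsto_pow_div_factorial_atTop (k * (T - s))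
  have hev : ∀ᶠ N in Filter.atTop,
      (k * (T - s))^N / (N.factorial : ℝ) < 1/2 :=
    htend.eventually_lt_const (by norm_num)
  obtain ⟨N, hN⟩ := hev.exists
  have hcontr : ContractingWith (1/2 : NNReal) (Φ^[N]) := by
    constructor
    · rw [← NNReal.coe_lt_coe]; norm_num
    · apply LipschitzWith.of_dist_le_mul
      intro y z
      have h0 : (0:ℝ) ≤ 1/2 * dist y z := by positivity
      have hcoe : ((1/2 : NNReal) : ℝ) = 1/2 := by norm_num
      rw [hcoe]
      refine (ContinuousMap.dist_le h0).2 ?_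
      intro t
      refine (key N y z t).trans ?_
      have hmono : (k * ((t:ℝ) - s))^N ≤ (k * (T - s))^N := by
        apply pow_le_pow_left₀
        · nlinarith [t.2.1]
        · nlinarith [t.2.2]
      calc (k * ((t:ℝ) - s))^N / (N.factorial : ℝ) * dist y z ≤
          (k * (T - s))^N / (N.factorial : ℝ) * dist y z := by
            have hfacpos : (0:ℝ) < (N.factorial : ℝ) := by positivity
            apply mul_le_mul_of_nonneg_right _ dist_nonneg
            exact (div_le_div_iff_of_pos_right hfacpos).2 hmono
        _ ≤ 1/2 * dist y z := mul_le_mul_of_nonneg_right hN.le dist_nonneg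
  haveI : Nonempty C(Icc s T, EuclideanSpace ℝ (Fin n)) := ⟨ContinuousMap.const _ 0⟩
  set Y := ContractingWith.fixedPoint (Φ^[N]) hcontr with hYdef
  have hfix : Φ Y = Y := hcontr.isFixedPt_fixedPoint_iterate
  refine ⟨IccExtend hsT Y, ?_⟩
  intro t ht
  have h7 : IccExtend hsT Y t = Y ⟨t, ht⟩ := IccExtend_of_mem hsT Y ht
  rw [h7]
  conv_lhs => rw [← hfix]
  exact hΦapp Y ⟨t, ht⟩

/-- Dynamic Programming Principle, monotonicity part: under the standing
hypotheses (H), for every `φ ∈ L²(μ,Ω;ℝⁿ)`, every `0 ≤ s₁ ≤ s₂ ≤ T` and every admissible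
control `u` on `[s₁,s₂]` with trajectory `x` starting from `φ`, one has
`V(s₁,φ) ≤ V(s₂, x(s₂,·))`. -/
theorem stmt_3 {n m : ℕ} {Ω : Type*} [MeasurableSpace Ω]
    (μ : Measure Ω) [IsFiniteMeasure μ]
    (T c k : ℝ) (hT : 0 < T) (hc : 0 < c) (hk : 0 < k)
    (f : ℝ → EuclideanSpace ℝ (Fin n) → EuclideanSpace ℝ (Fin m) → Ω →
      EuclideanSpace ℝ (Fin n))
    (U : ℝ → Set (EuclideanSpace ℝ (Fin m)))
    (g : EuclideanSpace ℝ (Fin n) → Ω → ℝ)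
    -- (H)(ii): U upper semicontinuous with nonempty compact values in a compact set
    (hUcpt : ∀ t, IsCompact (U t)) (hUne : ∀ t, (U t).Nonempty)
    (hUbd : ∃ K : Set (EuclideanSpace ℝ (Fin m)), IsCompact K ∧ ∀ t, U t ⊆ K)
    (hUusc : ∀ F : Set (EuclideanSpace ℝ (Fin m)), IsClosed F →
      IsClosed {t : ℝ | (U t ∩ F).Nonempty})
    -- (H)(iii): f measurable in t, continuous in (x,u), linear growth, Lipschitz in x
    (hfmeas : ∀ x u ω, Measurable fun t => f t x u ω)
    (hfcont : ∀ t ω, Continuous fun p : EuclideanSpace ℝ (Fin n) × EuclideanSpace ℝ (Fin m) =>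
      f t p.1 p.2 ω)
    (hgrowth : ∀ t x u ω, ‖f t x u ω‖ ≤ c * (1 + ‖x‖))
    (hLip : ∀ t x x' u ω, ‖f t x u ω - f t x' u ω‖ ≤ k * ‖x - x'‖)
    -- (H)(iv): g is a normal integrand bounded below by `a(ω) − b|x|²`
    (hglsc : ∀ ω, LowerSemicontinuous fun x => g x ω)
    (hgbound : ∃ a : Ω → ℝ, Integrable a μ ∧ ∃ b : ℝ, 0 ≤ b ∧
      ∀ x ω, a ω - b * ‖x‖ ^ 2 ≤ g x ω)
    (φ : Ω → EuclideanSpace ℝ (Fin n)) (hφ : Integrable (fun ω => ‖φ ω‖ ^ 2) μ)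
    (s₁ s₂ : ℝ) (h0 : 0 ≤ s₁) (h12 : s₁ ≤ s₂) (h2T : s₂ ≤ T)
    (x : ℝ → Ω → EuclideanSpace ℝ (Fin n)) (u : ℝ → EuclideanSpace ℝ (Fin m))
    (hxu : IsProcess f U s₁ s₂ φ x u) :
    valueFn μ f U g T s₁ φ ≤ valueFn μ f U g T s₂ (x s₂) := by
  classical
  obtain ⟨a, haInt, b, hb, hgb⟩ := hgbound
  have h1T : s₁ ≤ T := h12.trans h2T
  -- regularity of arbitrary processes
  have reg : ∀ (s e : ℝ), s ≤ e → ∀ (ψ : Ω → EuclideanSpace ℝ (Fin n))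
      (y : ℝ → Ω → EuclideanSpace ℝ (Fin n)) (v : ℝ → EuclideanSpace ℝ (Fin m)),
      Measurable v →
      (∀ t ∈ Icc s e, ∀ ω, y t ω = ψ ω + ∫ σ in Ioc s t, f σ (y σ ω) (v σ) ω) → ∀ ω : Ω,
      IntegrableOn (fun σ => f σ (y σ ω) (v σ) ω) (Ioc s e) volume ∧
        ∀ t ∈ Icc s e, ‖y t ω‖ ≤ (1 + ‖ψ ω‖) * Real.exp (c * (e - s)) := by
    intro s e hse ψ y v hv hy ω
    exact process_reg hc hse (ψ ω) (fun σ p => f σ p (v σ) ω) (fun σ => y σ ω)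
      ((caratheodory_meas f hfmeas hfcont ω measurable_const hv).aestronglyMeasurable.restrict)
      (fun σ p => hgrowth σ p (v σ) ω) (fun t ht => hy t ht ω)
  set S₁ : Set ℝ :=
    { r | ∃ y v, IsProcess f U s₁ T φ y v ∧ r = termCost μ g (y T) } with hS₁def
  set S₂ : Set ℝ :=
    { r | ∃ y v, IsProcess f U s₂ T (x s₂) y v ∧ r = termCost μ g (y T) } with hS₂def
  -- (1) concatenation: S₂ ⊆ S₁
  have hsub : S₂ ⊆ S₁ := by
    rintro r ⟨y, v, hyv, hre⟩
    set z : ℝ → Ω → EuclideanSpace ℝ (Fin n) :=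
      fun t ω => if t ≤ s₂ then x t ω else y t ω with hzdef
    set w : ℝ → EuclideanSpace ℝ (Fin m) :=
      fun t => if t ≤ s₂ then u t else v t with hwdef
    have hwmeas : Measurable w := Measurable.ite measurableSet_Iic hxu.1 hyv.1
    -- control constraint
    have hae : ∀ᵐ t ∂(volume.restrict (Icc s₁ T)), w t ∈ U t := by
      have hsubU : Icc s₁ T ⊆ Icc s₁ s₂ ∪ Icc s₂ T := by
        intro t ht
        by_cases h : t ≤ s₂
        · exact Or.inl ⟨ht.1, h⟩
        · exact Or.inr ⟨le_of_lt (not_le.1 h), ht.2⟩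
      have hle : volume.restrict (Icc s₁ T) ≤
          volume.restrict (Icc s₁ s₂) + volume.restrict (Icc s₂ T) :=
        le_trans (Measure.restrict_mono hsubU le_rfl) (Measure.restrict_union_le _ _)
      have h1 : ∀ᵐ t ∂(volume.restrict (Icc s₁ s₂)), w t ∈ U t := by
        filter_upwards [hxu.2.1, ae_restrict_mem measurableSet_Icc] with t h1t h2t
        have hwt : w t = u t := if_pos h2t.2
        rw [hwt]; exact h1t
      have h2 : ∀ᵐ t ∂(volume.restrict (Icc s₂ T)), w t ∈ U t := by
        have hzero : (volume.restrict (Icc s₂ T)) {s₂} = 0 := by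
          rw [Measure.restrict_apply (measurableSet_singleton _)]
          exact measure_mono_null inter_subset_left (measure_singleton s₂)
        have hns : ∀ᵐ t ∂(volume.restrict (Icc s₂ T)), t ≠ s₂ := by
          have hset : {t : ℝ | ¬ t ≠ s₂} = {s₂} := by ext; simp
          rw [ae_iff, hset]; exact hzero
        filter_upwards [hyv.2.1, ae_restrict_mem measurableSet_Icc, hns] with t h1t h2t h3t
        have hlt : s₂ < t := lt_of_le_of_ne h2t.1 (Ne.symm h3t)
        have hwt : w t = v t := if_neg (not_le.2 hlt)
        rw [hwt]; exact h1t
      exact Filter.Eventually.filter_mono (ae_mono hle) (ae_add_measure_iff.2 ⟨h1, h2⟩)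
    -- the equation
    have heq : ∀ t ∈ Icc s₁ T, ∀ ω,
        z t ω = φ ω + ∫ σ in Ioc s₁ t, f σ (z σ ω) (w σ) ω := by
      intro t ht ω
      by_cases hts : t ≤ s₂
      · have htm : t ∈ Icc s₁ s₂ := ⟨ht.1, hts⟩
        have h1 : z t ω = x t ω := if_pos hts
        rw [h1, hxu.2.2 t htm]
        congr 1
        refine setIntegral_congr_fun measurableSet_Ioc ?_
        intro σ hσ
        have hσ2 : σ ≤ s₂ := hσ.2.trans hts
        have hz : z σ ω = x σ ω := if_pos hσ2
        have hw : w σ = u σ := if_pos hσ2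
        simp only [hz, hw]
      · push_neg at hts
        have h1 : z t ω = y t ω := if_neg (not_le.2 hts)
        have h2 := hyv.2.2 t ⟨le_of_lt hts, ht.2⟩
        have h3 := hxu.2.2 s₂ ⟨h12, le_refl s₂⟩
        have hR1 := (reg s₁ s₂ h12 φ x u hxu.1 hxu.2.2 ω).1
        have hR2 := (reg s₂ T h2T (x s₂) y v hyv.1 hyv.2.2 ω).1
        have hEq1 : EqOn (fun σ => f σ (x σ ω) (u σ) ω)
            (fun σ => f σ (z σ ω) (w σ) ω) (Ioc s₁ s₂) := by
          intro σ hσ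
          have hz : z σ ω = x σ ω := if_pos hσ.2
          have hw : w σ = u σ := if_pos hσ.2
          simp only [hz, hw]
        have hEq2 : EqOn (fun σ => f σ (y σ ω) (v σ) ω)
            (fun σ => f σ (z σ ω) (w σ) ω) (Ioc s₂ t) := by
          intro σ hσ
          have hz : z σ ω = y σ ω := if_neg (not_le.2 hσ.1)
          have hw : w σ = v σ := if_neg (not_le.2 hσ.1)
          simp only [hz, hw]
        have hI1 : IntegrableOn (fun σ => f σ (z σ ω) (w σ) ω) (Ioc s₁ s₂) volume :=
          hR1.congr_fun hEq1 measurableSet_Ioc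
        have hI2 : IntegrableOn (fun σ => f σ (z σ ω) (w σ) ω) (Ioc s₂ t) volume :=
          (hR2.mono_set (Ioc_subset_Ioc_right ht.2)).congr_fun
            (fun σ hσ => hEq2 hσ) measurableSet_Ioc
        rw [h1, h2, h3]
        rw [setIntegral_congr_fun measurableSet_Ioc hEq1,
          setIntegral_congr_fun measurableSet_Ioc hEq2]
        rw [add_assoc]
        congr 1
        rw [← setIntegral_union (Ioc_disjoint_Ioc_of_le le_rfl) measurableSet_Ioc hI1 hI2,
          Ioc_union_Ioc_eq_Ioc h12 (le_of_lt hts)]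
    have hzT : z T = y T := by
      funext ω
      by_cases hT2 : T ≤ s₂
      · have hseq : s₂ = T := le_antisymm h2T hT2
        have h1 : z T ω = x T ω := if_pos hT2
        have h2 := hyv.2.2 T ⟨h2T, le_refl T⟩
        rw [h1, h2, hseq]
        simp [Set.Ioc_self]
      · exact if_neg hT2
    exact ⟨z, w, ⟨hwmeas, hae, heq⟩, by rw [hzT]; exact hre⟩
  -- (2) S₁ is bounded below
  have hbdd : BddBelow S₁ := by
    set D : ℝ := Real.exp (c * (T - s₁)) with hDdef
    have hD0 : 0 < D := Real.exp_pos _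
    have hm'int : Integrable (fun ω => a ω - b * D^2 * (2 + 2 * ‖φ ω‖^2)) μ := by
      refine haInt.sub ?_
      have h2' : Integrable (fun ω => 2 + 2 * ‖φ ω‖^2) μ :=
        (integrable_const (2:ℝ)).add (hφ.const_mul 2)
      exact h2'.const_mul (b * D^2)
    set L : ℝ := ∫ ω, (a ω - b * D^2 * (2 + 2 * ‖φ ω‖^2)) ∂μ with hLdef
    refine ⟨min 0 L, ?_⟩
    rintro r ⟨y, v, hyv, hre⟩
    by_cases hGi : Integrable (fun ω => g (y T ω) ω) μ
    · have hpt : ∀ ω, a ω - b * D^2 * (2 + 2 * ‖φ ω‖^2) ≤ g (y T ω) ω := by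
        intro ω
        have hbound := (reg s₁ T h1T φ y v hyv.1 hyv.2.2 ω).2 T ⟨h1T, le_refl T⟩
        have hgω := hgb (y T ω) ω
        have hn : (0:ℝ) ≤ ‖y T ω‖ := norm_nonneg _
        have hφn : (0:ℝ) ≤ ‖φ ω‖ := norm_nonneg _
        have h1 : ‖y T ω‖^2 ≤ ((1 + ‖φ ω‖) * D)^2 := pow_le_pow_left₀ hn hbound 2
        have h2 : ((1 + ‖φ ω‖) * D)^2 ≤ D^2 * (2 + 2 * ‖φ ω‖^2) := by
          nlinarith [sq_nonneg ((1 - ‖φ ω‖) * D), sq_nonneg D, hφn, hD0.le]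
        have hsq := h1.trans h2
        have h3 : b * ‖y T ω‖^2 ≤ b * (D^2 * (2 + 2 * ‖φ ω‖^2)) :=
          mul_le_mul_of_nonneg_left hsq hb
        nlinarith [hgω, h3]
      have : L ≤ r := by
        rw [hre]
        exact integral_mono hm'int hGi hpt
      exact le_trans (min_le_right _ _) this
    · have : r = 0 := by rw [hre]; exact integral_undef hGi
      rw [this]
      exact min_le_left _ _
  -- (3) S₂ is nonempty
  have hne₂ : S₂.Nonempty := by
    obtain ⟨us, husm, husmem⟩ := meas_selection U hUcpt hUne hUusc
    obtain ⟨ys, hys⟩ := exists_sol hc hk f hfmeas hfcont hgrowth hLip h2T us husm (x s₂)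
    exact ⟨termCost μ g (ys T), ys, us,
      ⟨husm, Filter.Eventually.of_forall (fun t => husmem t), hys⟩, rfl⟩
  -- conclude
  show sInf S₁ ≤ sInf S₂
  exact csInf_le_csInf hbdd hne₂ hsub
end

section
/- (Dynamic Programming Principle, equality part) For every φ ∈ L²(μ,Ω;ℝⁿ) and every 0 ≤ s₁ ≤ s₂ ≤ T, one has V(s₁, φ) = inf over admissible controls u ∈ 𝒰[s₁,T] of V(s₂, x_{φ,u}(s₂, ·)). -/
open MeasureTheory Set
open Filter

lemma gronwall_aux {n : ℕ} (c K : ℝ) (hc : 0 < c) (hK : 0 ≤ K) (s tstar : ℝ) (hst : s ≤ tstar)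
    (h : ℝ → EuclideanSpace ℝ (Fin n)) (hint : IntegrableOn h (Ioc s tstar))
    (hb : ∀ σ ∈ Ioc s tstar, ‖h σ‖ ≤ c * (K + ∫ τ in Ioc s σ, ‖h τ‖)) :
    ∀ t ∈ Icc s tstar, (∫ σ in Ioc s t, ‖h σ‖) ≤ K * (Real.exp (c * (t - s)) - 1) := by
  set M : ℝ → ℝ := fun t => ∫ σ in Ioc s t, ‖h σ‖ with hM
  have hMmono : ∀ t ∈ Icc s tstar, M t ≤ M tstar := by
    intro t ht
    refine setIntegral_mono_set hint.norm ?_ ?_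
    · exact Eventually.of_forall fun σ => norm_nonneg _
    · exact HasSubset.Subset.eventuallyLE (Ioc_subset_Ioc_right ht.2)
  set B₀ := M tstar with hB₀
  set g : ℕ → ℝ → ℝ := fun N σ => K * Real.exp (c * (σ - s)) + B₀ * (c * (σ - s)) ^ N / N.factorial with hg
  have hderiv : ∀ N σ, HasDerivAt (g (N + 1)) (c * g N σ) σ := by
    intro N σ
    have hinner : HasDerivAt (fun σ : ℝ => c * (σ - s)) c σ := by
      simpa using ((hasDerivAt_id σ).sub_const s).const_mul c
    have h1 : HasDerivAt (fun σ : ℝ => K * Real.exp (c * (σ - s))) (K * (Real.exp (c * (σ - s)) * c)) σ :=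
      (hinner.exp).const_mul K
    have h2 : HasDerivAt (fun σ : ℝ => B₀ * (c * (σ - s)) ^ (N + 1) / ((N + 1).factorial : ℝ))
        ((B₀ * ((N + 1 : ℕ) * (c * (σ - s)) ^ N * c)) / ((N + 1).factorial : ℝ)) σ := by
      exact ((hinner.pow (N + 1)).const_mul B₀).div_const _
    have := h1.add h2
    refine this.congr_deriv ?_
    have hfac : ((N + 1).factorial : ℝ) = (N + 1 : ℝ) * (N.factorial : ℝ) := by
      rw [Nat.factorial_succ]; push_cast; ring
    have hNfac : (N.factorial : ℝ) ≠ 0 := Nat.cast_ne_zero.2 (Nat.factorial_ne_zero N)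
    have hN1 : (N + 1 : ℝ) ≠ 0 := by positivity
    simp only [hg]
    rw [hfac]
    push_cast
    field_simp
  have key : ∀ N : ℕ, ∀ t ∈ Icc s tstar,
      M t ≤ K * (Real.exp (c * (t - s)) - 1) + B₀ * (c * (t - s)) ^ N / N.factorial := by
    intro N
    induction N with
    | zero =>
      intro t ht
      have h1 : M t ≤ B₀ := hMmono t ht
      have h2 : 0 ≤ K * (Real.exp (c * (t - s)) - 1) := by
        have : (1 : ℝ) ≤ Real.exp (c * (t - s)) := by
          apply Real.one_le_exp; nlinarith [ht.1]
        nlinarith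
      simp only [pow_zero, Nat.factorial_zero, Nat.cast_one, mul_one]
      linarith
    | succ N ih =>
      intro t ht
      have hpt : ∀ σ ∈ Ioc s t, ‖h σ‖ ≤ c * g N σ := by
        intro σ hσ
        have hσ' : σ ∈ Ioc s tstar := Ioc_subset_Ioc_right ht.2 hσ
        have hσ'' : σ ∈ Icc s tstar := ⟨hσ.1.le, hσ'.2⟩
        have := hb σ hσ'
        have h2 := ih σ hσ''
        calc ‖h σ‖ ≤ c * (K + M σ) := this
          _ ≤ c * (K + (K * (Real.exp (c * (σ - s)) - 1) + B₀ * (c * (σ - s)) ^ N / N.factorial)) := by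
              nlinarith
          _ = c * g N σ := by simp only [hg]; ring
      have hgc : Continuous fun σ => c * g N σ := by
        simp only [hg]
        fun_prop
      have h1 : M t ≤ ∫ σ in Ioc s t, c * g N σ := by
        refine setIntegral_mono_on ?_ (hgc.integrableOn_Ioc) measurableSet_Ioc hpt
        exact IntegrableOn.mono_set hint.norm (Ioc_subset_Ioc_right ht.2)
      have h2 : (∫ σ in Ioc s t, c * g N σ) = g (N + 1) t - g (N + 1) s := by
        rw [← intervalIntegral.integral_of_le ht.1]
        exact intervalIntegral.integral_eq_sub_of_hasDerivAt (fun σ _ => hderiv N σ)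
          (hgc.intervalIntegrable s t)
      have h3 : g (N + 1) s = K := by
        simp [hg]
      rw [h2, h3] at h1
      simp only [hg] at h1 ⊢
      linarith
  intro t ht
  have htend : Tendsto (fun N : ℕ => K * (Real.exp (c * (t - s)) - 1) + B₀ * ((c * (t - s)) ^ N / N.factorial))
      atTop (nhds (K * (Real.exp (c * (t - s)) - 1) + B₀ * 0)) :=
    tendsto_const_nhds.add ((FloorSemiring.tendsto_pow_div_factorial_atTop (c * (t - s))).const_mul B₀)
  rw [mul_zero, add_zero] at htend
  refine ge_of_tendsto' htend fun N => ?_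
  have := key N t ht
  calc M t ≤ K * (Real.exp (c * (t - s)) - 1) + B₀ * (c * (t - s)) ^ N / N.factorial := this
    _ = K * (Real.exp (c * (t - s)) - 1) + B₀ * ((c * (t - s)) ^ N / N.factorial) := by ring


lemma carath {n m : ℕ} {Ω : Type*} [MeasurableSpace Ω]
    (f : ℝ → EuclideanSpace ℝ (Fin n) → EuclideanSpace ℝ (Fin m) → Ω → EuclideanSpace ℝ (Fin n))
    (hfmeas : ∀ x u ω, Measurable fun t => f t x u ω)
    (hfcont : ∀ t ω, Continuous fun p : EuclideanSpace ℝ (Fin n) × EuclideanSpace ℝ (Fin m) => f t p.1 p.2 ω)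
    (u : ℝ → EuclideanSpace ℝ (Fin m)) (hu : Measurable u) (ω : Ω)
    (ξ : ℝ → EuclideanSpace ℝ (Fin n)) (hξ : Measurable ξ) :
    Measurable fun σ => f σ (ξ σ) (u σ) ω := by
  have h1 : Measurable (Function.uncurry
      (fun (p : EuclideanSpace ℝ (Fin n) × EuclideanSpace ℝ (Fin m)) (t : ℝ) => f t p.1 p.2 ω)) :=
    measurable_uncurry_of_continuous_of_measurable (fun t => hfcont t ω) (fun p => hfmeas p.1 p.2 ω)
  exact h1.comp ((hξ.prodMk hu).prodMk measurable_id)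

lemma core {n m : ℕ} {Ω : Type*} [MeasurableSpace Ω] (c : ℝ) (hc : 0 < c)
    (f : ℝ → EuclideanSpace ℝ (Fin n) → EuclideanSpace ℝ (Fin m) → Ω → EuclideanSpace ℝ (Fin n))
    (hfmeas : ∀ x u ω, Measurable fun t => f t x u ω)
    (hfcont : ∀ t ω, Continuous fun p : EuclideanSpace ℝ (Fin n) × EuclideanSpace ℝ (Fin m) => f t p.1 p.2 ω)
    (hgrowth : ∀ t x u ω, ‖f t x u ω‖ ≤ c * (1 + ‖x‖))
    (u : ℝ → EuclideanSpace ℝ (Fin m)) (hu : Measurable u) (ω : Ω)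
    (s T : ℝ) (hsT : s ≤ T) (φ₀ : EuclideanSpace ℝ (Fin n)) (x : ℝ → EuclideanSpace ℝ (Fin n))
    (hx : ∀ t ∈ Icc s T, x t = φ₀ + ∫ σ in Ioc s t, f σ (x σ) (u σ) ω) :
    IntegrableOn (fun σ => f σ (x σ) (u σ) ω) (Ioc s T) ∧
      ∀ t ∈ Icc s T, ‖x t‖ ≤ (1 + ‖φ₀‖) * Real.exp (c * (t - s)) - 1 := by
  set h : ℝ → EuclideanSpace ℝ (Fin n) := fun σ => f σ (x σ) (u σ) ω with hh
  set K : ℝ := 1 + ‖φ₀‖ with hKdef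
  have hK0 : (0:ℝ) ≤ K := by positivity
  have hK1 : (1:ℝ) ≤ K := by rw [hKdef]; linarith [norm_nonneg φ₀]
  set I : Set ℝ := {t | t ∈ Icc s T ∧ IntegrableOn h (Ioc s t)} with hI
  have hsI : s ∈ I := ⟨⟨le_refl s, hsT⟩, by simp [Set.Ioc_self, integrableOn_empty]⟩
  have hIdc : ∀ t ∈ I, ∀ t', s ≤ t' → t' ≤ t → t' ∈ I := by
    intro t ht t' h1 h2
    exact ⟨⟨h1, h2.trans ht.1.2⟩, IntegrableOn.mono_set ht.2 (Ioc_subset_Ioc_right h2)⟩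
  have hpt : ∀ σ ∈ Icc s T, ‖h σ‖ ≤ c * (K + ∫ τ in Ioc s σ, ‖h τ‖) := by
    intro σ hσ
    have hxσ : x σ = φ₀ + ∫ τ in Ioc s σ, h τ := hx σ hσ
    have hn : ‖x σ‖ ≤ ‖φ₀‖ + ∫ τ in Ioc s σ, ‖h τ‖ := by
      rw [hxσ]
      exact (norm_add_le _ _).trans (by gcongr; exact norm_integral_le_integral_norm _)
    calc ‖h σ‖ ≤ c * (1 + ‖x σ‖) := hgrowth σ (x σ) (u σ) ω
      _ ≤ c * (K + ∫ τ in Ioc s σ, ‖h τ‖) := by rw [hKdef]; nlinarith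
  have hbd : ∀ t ∈ I, ∀ t' ∈ Icc s t, ‖x t'‖ ≤ K * Real.exp (c * (t' - s)) - 1 := by
    intro t ht t' ht'
    have hG := gronwall_aux c K hc hK0 s t ht.1.1 h ht.2
      (fun σ hσ => hpt σ ⟨hσ.1.le, hσ.2.trans ht.1.2⟩) t' ht'
    have ht'' : t' ∈ Icc s T := ⟨ht'.1, ht'.2.trans ht.1.2⟩
    have hxσ : x t' = φ₀ + ∫ τ in Ioc s t', h τ := hx t' ht''
    have hn : ‖x t'‖ ≤ ‖φ₀‖ + ∫ τ in Ioc s t', ‖h τ‖ := by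
      rw [hxσ]
      exact (norm_add_le _ _).trans (by gcongr; exact norm_integral_le_integral_norm _)
    rw [hKdef] at hG ⊢; nlinarith
  set C : ℝ := K * Real.exp (c * (T - s)) - 1 with hC
  have hCbd : ∀ t ∈ I, ‖x t‖ ≤ C := by
    intro t ht
    have := hbd t ht t ⟨ht.1.1, le_refl t⟩
    have hexp : Real.exp (c * (t - s)) ≤ Real.exp (c * (T - s)) := by
      apply Real.exp_le_exp.2; nlinarith [ht.1.2]
    rw [hC]; nlinarith
  have hne : I.Nonempty := ⟨s, hsI⟩
  have hbdd : BddAbove I := ⟨T, fun t ht => ht.1.2⟩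
  set τ : ℝ := sSup I with hτ
  have hsτ : s ≤ τ := le_csSup hbdd hsI
  have hτT : τ ≤ T := csSup_le hne fun t ht => ht.1.2
  have hIlt : ∀ σ, s ≤ σ → σ < τ → σ ∈ I := by
    intro σ hσs hστ
    obtain ⟨t, htI, hlt⟩ := exists_lt_of_lt_csSup hne hστ
    exact hIdc t htI σ hσs hlt.le
  have claim1 : τ ∈ I := by
    rcases eq_or_lt_of_le hsτ with heq | hlt
    · rw [← heq]; exact hsI
    · refine ⟨⟨hsτ, hτT⟩, ?_⟩
      have hIoo : IntegrableOn h (Ioo s τ) := by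
        have hunion : Ioo s τ = ⋃ j : ℕ, Ioc s (max s (τ - 1 / (j + 1))) := by
          ext σ
          simp only [mem_Ioo, mem_iUnion, mem_Ioc]
          constructor
          · rintro ⟨h1, h2⟩
            obtain ⟨j, hj⟩ := exists_nat_one_div_lt (show (0:ℝ) < τ - σ by linarith)
            exact ⟨j, h1, le_max_of_le_right (by push_cast at hj ⊢; linarith)⟩
          · rintro ⟨j, h1, h2⟩
            refine ⟨h1, lt_of_le_of_lt h2 ?_⟩
            apply max_lt hlt
            have : (0:ℝ) < 1 / ((j:ℝ) + 1) := by positivity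
            linarith
        have hmem : ∀ j : ℕ, max s (τ - 1 / ((j:ℕ) + 1)) ∈ I := by
          intro j
          rcases le_or_gt (τ - 1 / ((j:ℝ) + 1)) s with hle | hgt
          · rw [max_eq_left (by push_cast; linarith)]; exact hsI
          · rw [max_eq_right (by push_cast; linarith)]
            refine hIlt _ (by push_cast; linarith) ?_
            have : (0:ℝ) < 1 / ((j:ℝ) + 1) := by positivity
            push_cast; linarith
        have haesm : AEStronglyMeasurable h (volume.restrict (Ioo s τ)) := by
          rw [hunion]
          exact aestronglyMeasurable_iUnion_iff.2 fun j => ((hmem j).2).aestronglyMeasurable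
        refine ⟨haesm, HasFiniteIntegral.of_bounded (C := c * (1 + C)) ?_⟩
        rw [ae_restrict_iff' measurableSet_Ioo]
        refine Eventually.of_forall fun σ hσ => ?_
        have hσI : σ ∈ I := hIlt σ hσ.1.le hσ.2
        have h1 := hCbd σ hσI
        have h2 := hgrowth σ (x σ) (u σ) ω
        calc ‖h σ‖ ≤ c * (1 + ‖x σ‖) := h2
          _ ≤ c * (1 + C) := by nlinarith
      exact hIoo.congr_set_ae Ioo_ae_eq_Ioc.symm
  have claim2 : τ = T := by
    by_contra hneq
    have hτlt : τ < T := lt_of_le_of_ne hτT hneq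
    have hnotI : ∀ σ ∈ Ioc τ T, σ ∉ I := by
      intro σ hσ hmem
      exact absurd (le_csSup hbdd hmem) (not_le.2 hσ.1)
    have hxconst : ∀ σ ∈ Ioc τ T, x σ = φ₀ := by
      intro σ hσ
      have hσIcc : σ ∈ Icc s T := ⟨hsτ.trans hσ.1.le, hσ.2⟩
      have hni : ¬ IntegrableOn h (Ioc s σ) := fun hint => hnotI σ hσ ⟨hσIcc, hint⟩
      rw [hx σ hσIcc, integral_undef hni, add_zero]
    have hint0 : IntegrableOn (fun σ => f σ φ₀ (u σ) ω) (Ioc τ T) := by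
      refine ⟨(carath f hfmeas hfcont u hu ω (fun _ => φ₀) measurable_const).aestronglyMeasurable, 
        HasFiniteIntegral.of_bounded (C := c * (1 + ‖φ₀‖)) (Eventually.of_forall fun σ => hgrowth σ φ₀ (u σ) ω)⟩
    have hintτT : IntegrableOn h (Ioc τ T) := by
      refine hint0.congr_fun (fun σ hσ => ?_) measurableSet_Ioc
      rw [hh]; simp only [hxconst σ hσ]
    have hTI : T ∈ I := by
      refine ⟨⟨hsT, le_refl T⟩, ?_⟩
      rw [← Ioc_union_Ioc_eq_Ioc hsτ hτlt.le]
      exact claim1.2.union hintτT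
    exact absurd (le_csSup hbdd hTI) (not_le.2 hτlt)
  have hTI : T ∈ I := claim2 ▸ claim1
  exact ⟨hTI.2, fun t ht => hbd T hTI t ht⟩


/-- Restriction of a process on `[s₁,T]` to `[s₂,T]`. -/
lemma process_restrict {n m : ℕ} {Ω : Type*} [MeasurableSpace Ω]
    {f : ℝ → EuclideanSpace ℝ (Fin n) → EuclideanSpace ℝ (Fin m) → Ω → EuclideanSpace ℝ (Fin n)}
    {U : ℝ → Set (EuclideanSpace ℝ (Fin m))} {s₁ s₂ T : ℝ}
    {φ : Ω → EuclideanSpace ℝ (Fin n)} {x : ℝ → Ω → EuclideanSpace ℝ (Fin n)}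
    {u : ℝ → EuclideanSpace ℝ (Fin m)}
    (hp : IsProcess f U s₁ T φ x u) (h12 : s₁ ≤ s₂) (h2T : s₂ ≤ T)
    (hint : ∀ ω, IntegrableOn (fun σ => f σ (x σ ω) (u σ) ω) (Ioc s₁ T)) :
    IsProcess f U s₂ T (x s₂) x u := by
  refine ⟨hp.1, ae_restrict_of_ae_restrict_of_subset (Icc_subset_Icc_left h12) hp.2.1, ?_⟩
  intro t ht ω
  have ht1 : t ∈ Icc s₁ T := ⟨h12.trans ht.1, ht.2⟩
  have e1 := hp.2.2 t ht1 ω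
  have e2 := hp.2.2 s₂ ⟨h12, h2T⟩ ω
  have hsplit : (∫ σ in Ioc s₁ t, f σ (x σ ω) (u σ) ω)
      = (∫ σ in Ioc s₁ s₂, f σ (x σ ω) (u σ) ω) + ∫ σ in Ioc s₂ t, f σ (x σ ω) (u σ) ω := by
    rw [← Ioc_union_Ioc_eq_Ioc h12 ht.1]
    exact setIntegral_union (Ioc_disjoint_Ioc_of_le le_rfl) measurableSet_Ioc
      ((hint ω).mono_set (Ioc_subset_Ioc_right h2T))
      ((hint ω).mono_set (Ioc_subset_Ioc h12 ht.2))
  rw [e1, hsplit, e2]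
  abel

/-- Concatenation of a process on `[s₁,T]` with a process on `[s₂,T]`. -/
lemma process_concat {n m : ℕ} {Ω : Type*} [MeasurableSpace Ω]
    {f : ℝ → EuclideanSpace ℝ (Fin n) → EuclideanSpace ℝ (Fin m) → Ω → EuclideanSpace ℝ (Fin n)}
    {U : ℝ → Set (EuclideanSpace ℝ (Fin m))} {s₁ s₂ T : ℝ}
    {φ : Ω → EuclideanSpace ℝ (Fin n)} {x y : ℝ → Ω → EuclideanSpace ℝ (Fin n)}
    {u v : ℝ → EuclideanSpace ℝ (Fin m)}
    (hp : IsProcess f U s₁ T φ x u) (hq : IsProcess f U s₂ T (x s₂) y v)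
    (h12 : s₁ ≤ s₂) (h2T : s₂ ≤ T)
    (hintx : ∀ ω, IntegrableOn (fun σ => f σ (x σ ω) (u σ) ω) (Ioc s₁ T))
    (hinty : ∀ ω, IntegrableOn (fun σ => f σ (y σ ω) (v σ) ω) (Ioc s₂ T)) :
    IsProcess f U s₁ T φ (fun t ω => if t ≤ s₂ then x t ω else y t ω)
      (fun σ => if σ ≤ s₂ then u σ else v σ) ∧
    ∀ ω, (if T ≤ s₂ then x T ω else y T ω) = y T ω := by
  set z : ℝ → Ω → EuclideanSpace ℝ (Fin n) := fun t ω => if t ≤ s₂ then x t ω else y t ω with hz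
  set w : ℝ → EuclideanSpace ℝ (Fin m) := fun σ => if σ ≤ s₂ then u σ else v σ with hw
  have hys₂ : ∀ ω, y s₂ ω = x s₂ ω := by
    intro ω
    have := hq.2.2 s₂ ⟨le_refl s₂, h2T⟩ ω
    simpa [Set.Ioc_self] using this
  have hterm : ∀ ω, (if T ≤ s₂ then x T ω else y T ω) = y T ω := by
    intro ω
    by_cases hTs : T ≤ s₂
    · have hTeq : T = s₂ := le_antisymm hTs h2T
      rw [if_pos hTs, hTeq, hys₂]
    · rw [if_neg hTs]
  refine ⟨⟨?_, ?_, ?_⟩, hterm⟩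
  · exact Measurable.ite measurableSet_Iic hp.1 hq.1
  · -- control constraint
    have hne : ∀ᵐ σ : ℝ ∂volume, σ ≠ s₂ := by
      rw [ae_iff]
      have : {σ : ℝ | ¬ σ ≠ s₂} = {s₂} := by ext σ; simp
      rw [this]; exact Real.volume_singleton
    have h1 : ∀ᵐ σ ∂(volume.restrict (Icc s₁ s₂)), w σ ∈ U σ := by
      have hu' := ae_restrict_of_ae_restrict_of_subset (Icc_subset_Icc_right h2T) hp.2.1
      have hmem := ae_restrict_mem (μ := volume) (s := Icc s₁ s₂) measurableSet_Icc
      filter_upwards [hu', hmem] with σ hσ1 hσ2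
      rw [hw]; simp only [if_pos hσ2.2]; exact hσ1
    have h2 : ∀ᵐ σ ∂(volume.restrict (Icc s₂ T)), w σ ∈ U σ := by
      have hv' := hq.2.1
      have hmem := ae_restrict_mem (μ := volume) (s := Icc s₂ T) measurableSet_Icc
      have hne' : ∀ᵐ σ ∂(volume.restrict (Icc s₂ T)), σ ≠ s₂ :=
        hne.filter_mono (ae_mono Measure.restrict_le_self)
      filter_upwards [hv', hmem, hne'] with σ hσ1 hσ2 hσ3
      have : ¬ σ ≤ s₂ := fun hle => hσ3 (le_antisymm hle hσ2.1)
      rw [hw]; simp only [if_neg this]; exact hσ1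
    have hle : volume.restrict (Icc s₁ T)
        ≤ volume.restrict (Icc s₁ s₂) + volume.restrict (Icc s₂ T) := by
      have := Measure.restrict_union_le (μ := volume) (Icc s₁ s₂) (Icc s₂ T)
      rw [Icc_union_Icc_eq_Icc h12 h2T] at this
      exact this
    have hsum : ∀ᵐ σ ∂(volume.restrict (Icc s₁ s₂) + volume.restrict (Icc s₂ T)), w σ ∈ U σ :=
      (ae_add_measure_iff.2 ⟨h1, h2⟩)
    exact hsum.filter_mono (ae_mono hle)
  · -- integral equation
    intro t ht ω
    rcases le_or_gt t s₂ with hts | hts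
    · have hzt : z t ω = x t ω := by rw [hz]; simp only [if_pos hts]
      rw [hzt, hp.2.2 t ⟨ht.1, hts.trans h2T⟩ ω]
      congr 1
      refine setIntegral_congr_fun measurableSet_Ioc fun σ hσ => ?_
      have h1 : σ ≤ s₂ := hσ.2.trans hts
      rw [hz, hw]; simp only [if_pos h1]
    · have hzt : z t ω = y t ω := by rw [hz]; simp only [if_neg (not_le.2 hts)]
      have hint1 : IntegrableOn (fun σ => f σ (z σ ω) (w σ)  ω) (Ioc s₁ s₂) := by
        refine (((hintx ω).mono_set (Ioc_subset_Ioc_right h2T)).congr_fun (fun σ hσ => ?_) measurableSet_Ioc)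
        rw [hz, hw]; simp only [if_pos hσ.2]
      have hint2 : IntegrableOn (fun σ => f σ (z σ ω) (w σ) ω) (Ioc s₂ t) := by
        refine (((hinty ω).mono_set (Ioc_subset_Ioc_right ht.2)).congr_fun (fun σ hσ => ?_) measurableSet_Ioc)
        rw [hz, hw]; simp only [if_neg (not_le.2 hσ.1)]
      have hsplit : (∫ σ in Ioc s₁ t, f σ (z σ ω) (w σ) ω)
          = (∫ σ in Ioc s₁ s₂, f σ (z σ ω) (w σ) ω) + ∫ σ in Ioc s₂ t, f σ (z σ ω) (w σ) ω := by
        rw [← Ioc_union_Ioc_eq_Ioc h12 hts.le]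
        exact setIntegral_union (Ioc_disjoint_Ioc_of_le le_rfl) measurableSet_Ioc hint1 hint2
      have e1 : (∫ σ in Ioc s₁ s₂, f σ (z σ ω) (w σ) ω) = ∫ σ in Ioc s₁ s₂, f σ (x σ ω) (u σ) ω := by
        refine setIntegral_congr_fun measurableSet_Ioc fun σ hσ => ?_
        rw [hz, hw]; simp only [if_pos hσ.2]
      have e2 : (∫ σ in Ioc s₂ t, f σ (z σ ω) (w σ) ω) = ∫ σ in Ioc s₂ t, f σ (y σ ω) (v σ) ω := by
        refine setIntegral_congr_fun measurableSet_Ioc fun σ hσ => ?_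
        rw [hz, hw]; simp only [if_neg (not_le.2 hσ.1)]
      have e3 := hp.2.2 s₂ ⟨h12, h2T⟩ ω
      have e4 := hq.2.2 t ⟨hts.le, ht.2⟩ ω
      rw [hzt, hsplit, e1, e2, e4, e3]
      abel


/-- Lower bound for the terminal cost. -/
lemma cost_lb {n : ℕ} {Ω : Type*} [MeasurableSpace Ω] (μ : Measure Ω)
    (g : EuclideanSpace ℝ (Fin n) → Ω → ℝ) (a : Ω → ℝ) (ha : Integrable a μ)
    (b : ℝ) (hb : 0 ≤ b) (hg : ∀ x ω, a ω - b * ‖x‖ ^ 2 ≤ g x ω)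
    (ψ : Ω → EuclideanSpace ℝ (Fin n)) (R : Ω → ℝ) (hR : ∀ ω, ‖ψ ω‖ ≤ R ω)
    (hl : Integrable (fun ω => a ω - b * (R ω) ^ 2) μ) :
    min (∫ ω, (a ω - b * (R ω) ^ 2) ∂μ) 0 ≤ termCost μ g ψ := by
  by_cases hGint : Integrable (fun ω => g (ψ ω) ω) μ
  · refine le_trans (min_le_left _ _) ?_
    refine integral_mono hl hGint fun ω => ?_
    have h1 : ‖ψ ω‖ ^ 2 ≤ (R ω) ^ 2 := by nlinarith [norm_nonneg (ψ ω), hR ω]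
    have h2 := hg (ψ ω) ω
    simp only
    nlinarith
  · rw [termCost, integral_undef hGint]
    exact min_le_right _ _


/-- Dynamic Programming Principle, equality part: under the standing
hypotheses (H), for every `φ ∈ L²(μ,Ω;ℝⁿ)` and every `0 ≤ s₁ ≤ s₂ ≤ T`,
`V(s₁,φ) = inf { V(s₂, x_{φ,u}(s₂,·)) : u ∈ 𝒰[s₁,T] }`. -/
theorem stmt_4 {n m : ℕ} {Ω : Type*} [MeasurableSpace Ω]
    (μ : Measure Ω) [IsFiniteMeasure μ]
    (T c k : ℝ) (hT : 0 < T) (hc : 0 < c) (hk : 0 < k)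
    (f : ℝ → EuclideanSpace ℝ (Fin n) → EuclideanSpace ℝ (Fin m) → Ω →
      EuclideanSpace ℝ (Fin n))
    (U : ℝ → Set (EuclideanSpace ℝ (Fin m)))
    (g : EuclideanSpace ℝ (Fin n) → Ω → ℝ)
    (hUcpt : ∀ t, IsCompact (U t)) (hUne : ∀ t, (U t).Nonempty)
    (hUbd : ∃ K : Set (EuclideanSpace ℝ (Fin m)), IsCompact K ∧ ∀ t, U t ⊆ K)
    (hUusc : ∀ F : Set (EuclideanSpace ℝ (Fin m)), IsClosed F →
      IsClosed {t : ℝ | (U t ∩ F).Nonempty})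
    (hfmeas : ∀ x u ω, Measurable fun t => f t x u ω)
    (hfcont : ∀ t ω, Continuous fun p : EuclideanSpace ℝ (Fin n) × EuclideanSpace ℝ (Fin m) =>
      f t p.1 p.2 ω)
    (hgrowth : ∀ t x u ω, ‖f t x u ω‖ ≤ c * (1 + ‖x‖))
    (hLip : ∀ t x x' u ω, ‖f t x u ω - f t x' u ω‖ ≤ k * ‖x - x'‖)
    (hglsc : ∀ ω, LowerSemicontinuous fun x => g x ω)
    (hgbound : ∃ a : Ω → ℝ, Integrable a μ ∧ ∃ b : ℝ, 0 ≤ b ∧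
      ∀ x ω, a ω - b * ‖x‖ ^ 2 ≤ g x ω)
    (φ : Ω → EuclideanSpace ℝ (Fin n)) (hφ : Integrable (fun ω => ‖φ ω‖ ^ 2) μ)
    (s₁ s₂ : ℝ) (h0 : 0 ≤ s₁) (h12 : s₁ ≤ s₂) (h2T : s₂ ≤ T) :
    valueFn μ f U g T s₁ φ =
      sInf { r | ∃ x u, IsProcess f U s₁ T φ x u ∧ r = valueFn μ f U g T s₂ (x s₂) } := by
  classical
  obtain ⟨a, ha, b, hb, hg⟩ := hgbound
  have hs1T : s₁ ≤ T := h12.trans h2T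
  set E1 : ℝ := Real.exp (c * T) with hE1def
  have hE1 : 1 ≤ E1 := Real.one_le_exp (by positivity)
  set R : Ω → ℝ := fun ω => (1 + ‖φ ω‖) * E1 ^ 2 with hRdef
  have hφa : AEStronglyMeasurable (fun ω => ‖φ ω‖) μ := by
    have h1 : AEStronglyMeasurable (fun ω => Real.sqrt (‖φ ω‖ ^ 2)) μ :=
      Real.continuous_sqrt.comp_aestronglyMeasurable hφ.1
    refine h1.congr (Eventually.of_forall fun ω => ?_)
    simp only
    exact Real.sqrt_sq (norm_nonneg _)
  have hφ1 : Integrable (fun ω => ‖φ ω‖) μ := by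
    refine Integrable.mono ((integrable_const (1:ℝ)).add hφ) hφa (Eventually.of_forall fun ω => ?_)
    have h1 : (0:ℝ) ≤ 1 + ‖φ ω‖ ^ 2 := by positivity
    simp only [Real.norm_eq_abs, Pi.add_apply]
    rw [abs_of_nonneg (norm_nonneg _), abs_of_nonneg h1]
    nlinarith [norm_nonneg (φ ω)]
  have hl : Integrable (fun ω => a ω - b * (R ω) ^ 2) μ := by
    have h1 : Integrable (fun ω => (1:ℝ) + 2 * ‖φ ω‖ + ‖φ ω‖ ^ 2) μ :=
      ((integrable_const (1:ℝ)).add (hφ1.const_mul 2)).add hφ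
    have h2 : Integrable (fun ω => (b * E1 ^ 4) * ((1:ℝ) + 2 * ‖φ ω‖ + ‖φ ω‖ ^ 2)) μ :=
      h1.const_mul _
    refine ha.sub (h2.congr (Eventually.of_forall fun ω => ?_))
    rw [hRdef]; ring
  set L : ℝ := min (∫ ω, (a ω - b * (R ω) ^ 2) ∂μ) 0 with hLdef
  have keyx : ∀ x u, IsProcess f U s₁ T φ x u →
      (∀ ω, IntegrableOn (fun σ => f σ (x σ ω) (u σ) ω) (Ioc s₁ T)) ∧
      (∀ t, t ∈ Icc s₁ T → ∀ ω, ‖x t ω‖ ≤ (1 + ‖φ ω‖) * E1 - 1) := by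
    intro x u hp
    have hcore := fun ω => core c hc f hfmeas hfcont hgrowth u hp.1 ω s₁ T hs1T (φ ω)
      (fun t => x t ω) (fun t ht => hp.2.2 t ht ω)
    refine ⟨fun ω => (hcore ω).1, fun t ht ω => ?_⟩
    have h1 := (hcore ω).2 t ht
    have hexp : Real.exp (c * (t - s₁)) ≤ E1 := by
      rw [hE1def]; exact Real.exp_le_exp.2 (by nlinarith [ht.2])
    nlinarith [norm_nonneg (φ ω), Real.exp_pos (c * (t - s₁))]
  have keyy : ∀ (ψ : Ω → EuclideanSpace ℝ (Fin n)) y v, IsProcess f U s₂ T ψ y v →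
      (∀ ω, IntegrableOn (fun σ => f σ (y σ ω) (v σ) ω) (Ioc s₂ T)) ∧
      (∀ ω, ‖y T ω‖ ≤ (1 + ‖ψ ω‖) * E1 - 1) := by
    intro ψ y v hq
    have hcore := fun ω => core c hc f hfmeas hfcont hgrowth v hq.1 ω s₂ T h2T (ψ ω)
      (fun t => y t ω) (fun t ht => hq.2.2 t ht ω)
    refine ⟨fun ω => (hcore ω).1, fun ω => ?_⟩
    have h1 := (hcore ω).2 T ⟨h2T, le_refl T⟩
    have hexp : Real.exp (c * (T - s₂)) ≤ E1 := by
      rw [hE1def]; exact Real.exp_le_exp.2 (by nlinarith)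
    nlinarith [norm_nonneg (ψ ω), Real.exp_pos (c * (T - s₂))]
  set A := {r | ∃ x u, IsProcess f U s₁ T φ x u ∧ r = termCost μ g (x T)} with hAdef
  set B := {r | ∃ x u, IsProcess f U s₁ T φ x u ∧ r = valueFn μ f U g T s₂ (x s₂)} with hBdef
  have hAlb : ∀ r ∈ A, L ≤ r := by
    rintro r ⟨x, u, hp, rfl⟩
    refine cost_lb μ g a ha b hb hg (x T) R (fun ω => ?_) hl
    have h1 := (keyx x u hp).2 T ⟨hs1T, le_refl T⟩ ω
    rw [hRdef]
    simp only
    nlinarith [norm_nonneg (φ ω), mul_nonneg (mul_nonneg (show (0:ℝ) ≤ 1 + ‖φ ω‖ by positivity)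
      (show (0:ℝ) ≤ E1 by linarith)) (show (0:ℝ) ≤ E1 - 1 by linarith)]
  have hAp : ∀ x u, IsProcess f U s₁ T φ x u →
      (∀ r ∈ {r | ∃ y v, IsProcess f U s₂ T (x s₂) y v ∧ r = termCost μ g (y T)}, L ≤ r) ∧
      termCost μ g (x T) ∈ {r | ∃ y v, IsProcess f U s₂ T (x s₂) y v ∧ r = termCost μ g (y T)} ∧
      {r | ∃ y v, IsProcess f U s₂ T (x s₂) y v ∧ r = termCost μ g (y T)} ⊆ A := by
    intro x u hp
    have hxs₂ : ∀ ω, ‖x s₂ ω‖ ≤ (1 + ‖φ ω‖) * E1 - 1 := fun ω => (keyx x u hp).2 s₂ ⟨h12, h2T⟩ ω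
    refine ⟨?_, ?_, ?_⟩
    · rintro r ⟨y, v, hq, rfl⟩
      refine cost_lb μ g a ha b hb hg (y T) R (fun ω => ?_) hl
      have h1 := (keyy (x s₂) y v hq).2 ω
      have h2 := hxs₂ ω
      rw [hRdef]
      simp only
      nlinarith [norm_nonneg (φ ω), norm_nonneg (x s₂ ω),
        mul_le_mul_of_nonneg_right (show 1 + ‖x s₂ ω‖ ≤ (1 + ‖φ ω‖) * E1 by linarith)
          (show (0:ℝ) ≤ E1 by linarith)]
    · exact ⟨x, u, process_restrict hp h12 h2T (keyx x u hp).1, rfl⟩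
    · rintro r ⟨y, v, hq, rfl⟩
      obtain ⟨hproc, hterm⟩ := process_concat hp hq h12 h2T (keyx x u hp).1
        ((keyy (x s₂) y v hq).1)
      exact ⟨_, _, hproc, (congrArg (termCost μ g) (funext hterm)).symm⟩
  have hABdd : BddBelow A := ⟨L, hAlb⟩
  show sInf A = sInf B
  by_cases hAne : A.Nonempty
  · obtain ⟨r₀, x₀, u₀, hp₀, hr₀⟩ := hAne
    have hBne : B.Nonempty := ⟨valueFn μ f U g T s₂ (x₀ s₂), x₀, u₀, hp₀, rfl⟩
    refine le_antisymm ?_ ?_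
    · refine le_csInf hBne ?_
      rintro r ⟨x, u, hp, rfl⟩
      obtain ⟨hlb, hmem, hsub⟩ := hAp x u hp
      exact csInf_le_csInf hABdd ⟨_, hmem⟩ hsub
    · refine le_csInf ⟨r₀, x₀, u₀, hp₀, hr₀⟩ ?_
      rintro r ⟨x, u, hp, rfl⟩
      obtain ⟨hlb, hmem, hsub⟩ := hAp x u hp
      have h1 : valueFn μ f U g T s₂ (x s₂) ≤ termCost μ g (x T) := csInf_le ⟨L, hlb⟩ hmem
      have h2 : sInf B ≤ valueFn μ f U g T s₂ (x s₂) := by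
        refine csInf_le ⟨L, ?_⟩ ⟨x, u, hp, rfl⟩
        rintro r' ⟨x', u', hp', rfl⟩
        obtain ⟨hlb', hmem', _⟩ := hAp x' u' hp'
        exact le_csInf ⟨_, hmem'⟩ hlb'
      exact h2.trans h1
  · have hAe : A = ∅ := Set.not_nonempty_iff_eq_empty.1 hAne
    have hBe : B = ∅ := by
      rw [Set.eq_empty_iff_forall_notMem]
      rintro r ⟨x, u, hp, rfl⟩
      exact hAne ⟨termCost μ g (x T), x, u, hp, rfl⟩
    rw [hAe, hBe]
end

section
/- (Filippov measurable selection for the controlled ODE) Let U : [0,T] ⇝ ℝᵐ be a measurable multifunction with closed values, and suppose f(t,·,·) is measurable for a.e. t and the curve x satisfies ẋ(t) ∈ f(t, x(t), U(t)) a.e. t ∈ [s,T]. Then there exists a measurable control u : [s,T] → ℝᵐ with u(t) ∈ U(t) a.e. and ẋ(t) = f(t, x(t), u(t)) a.e. t ∈ [s,T]. -/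
open MeasureTheory Set Metric Filter Topology

namespace Stmt19Aux

variable {α : Type*} [MeasurableSpace α]

lemma measurable_sInf_setOf {A : ℕ → Set α} (hA : ∀ n, MeasurableSet (A n)) :
    Measurable fun t => sInf {n | t ∈ A n} := by
  apply measurable_to_countable'
  intro i
  rcases Nat.eq_zero_or_pos i with rfl | hi
  · have hset : (fun t => sInf {n | t ∈ A n}) ⁻¹' {0} = A 0 ∪ ⋂ n, (A n)ᶜ := by
      ext t
      simp only [mem_preimage, mem_singleton_iff, Nat.sInf_eq_zero, mem_union, mem_iInter,
        mem_compl_iff, mem_setOf_eq, eq_empty_iff_forall_notMem]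
    rw [hset]
    exact (hA 0).union (MeasurableSet.iInter fun n => (hA n).compl)
  · have hset : (fun t => sInf {n | t ∈ A n}) ⁻¹' {i} =
        A i ∩ ⋂ (m) (_ : m < i), (A m)ᶜ := by
      ext t
      simp only [mem_preimage, mem_singleton_iff, mem_inter_iff, mem_iInter, mem_compl_iff]
      constructor
      · intro h
        have hne : {n | t ∈ A n}.Nonempty := by
          by_contra hc
          rw [not_nonempty_iff_eq_empty] at hc
          rw [hc, Nat.sInf_empty] at h
          omega
        constructor
        · have := Nat.sInf_mem hne
          rwa [h] at this
        · intro m hm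
          have := Nat.notMem_of_lt_sInf (s := {n | t ∈ A n}) (by rw [h]; exact hm)
          exact this
      · rintro ⟨h1, h2⟩
        refine le_antisymm (Nat.sInf_le h1) ?_
        by_contra hc
        push_neg at hc
        exact h2 _ hc (Nat.sInf_mem (⟨i, h1⟩ : {n | t ∈ A n}.Nonempty))
    rw [hset]
    exact (hA i).inter (MeasurableSet.iInter fun m => MeasurableSet.iInter fun _ => (hA m).compl)


variable {E : Type*} [MetricSpace E] [Nonempty E] [TopologicalSpace.SeparableSpace E]
  [CompleteSpace E] [MeasurableSpace E] [BorelSpace E]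

theorem exists_measurable_selection {Γ : α → Set E}
    (hne : ∀ t, (Γ t).Nonempty) (hcl : ∀ t, IsClosed (Γ t))
    (hmeas : ∀ F : Set E, IsClosed F → Bornology.IsBounded F →
      MeasurableSet {t | (Γ t ∩ F).Nonempty}) :
    ∃ σ : α → E, Measurable σ ∧ ∀ t, σ t ∈ Γ t := by
  classical
  set d : ℕ → E := TopologicalSpace.denseSeq E with hd_def
  have hd : DenseRange d := TopologicalSpace.denseRange_denseSeq E
  set v : ℕ → α → ℕ := fun k => Nat.rec
    (fun t => sInf {n | (Γ t ∩ closedBall (d n) 1).Nonempty})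
    (fun k ih t => sInf {n | (Γ t ∩ closedBall (d n) ((1/2 : ℝ) ^ (k+1)) ∩
      closedBall (d (ih t)) ((1/2 : ℝ) ^ k)).Nonempty}) k with hv_def
  have hv0 : ∀ t, v 0 t = sInf {n | (Γ t ∩ closedBall (d n) 1).Nonempty} := fun _ => rfl
  have hvs : ∀ k t, v (k+1) t = sInf {n | (Γ t ∩ closedBall (d n) ((1/2 : ℝ) ^ (k+1)) ∩
      closedBall (d (v k t)) ((1/2 : ℝ) ^ k)).Nonempty} := fun _ _ => rfl
  -- the invariant
  have key : ∀ k t, (Γ t ∩ closedBall (d (v k t)) ((1/2 : ℝ) ^ k)).Nonempty := by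
    intro k
    induction k with
    | zero =>
      intro t
      obtain ⟨g, hg⟩ := hne t
      obtain ⟨n, hn⟩ := hd.exists_dist_lt g (by norm_num : (0:ℝ) < 1)
      have hSne : {n | (Γ t ∩ closedBall (d n) 1).Nonempty}.Nonempty :=
        ⟨n, g, hg, by simpa [mem_closedBall, dist_comm] using hn.le⟩
      have hmem := Nat.sInf_mem hSne
      rw [hv0]
      simpa using hmem
    | succ k ih =>
      intro t
      obtain ⟨g, hgΓ, hgB⟩ := ih t
      obtain ⟨n, hn⟩ := hd.exists_dist_lt g (pow_pos one_half_pos (k+1))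
      have hSne : {n | (Γ t ∩ closedBall (d n) ((1/2 : ℝ) ^ (k+1)) ∩
          closedBall (d (v k t)) ((1/2 : ℝ) ^ k)).Nonempty}.Nonempty :=
        ⟨n, g, ⟨hgΓ, by simpa [mem_closedBall, dist_comm] using hn.le⟩, hgB⟩
      have hmem := Nat.sInf_mem hSne
      rw [hvs]
      obtain ⟨g', ⟨hg'Γ, hg'B⟩, -⟩ := hmem
      exact ⟨g', hg'Γ, hg'B⟩
  -- witness for successive distances
  have hdist : ∀ k t, dist (d (v (k+1) t)) (d (v k t)) ≤ (3/2) * (1/2 : ℝ) ^ k := by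
    intro k t
    obtain ⟨g, hgΓ, hgB⟩ := key k t
    obtain ⟨n, hn⟩ := hd.exists_dist_lt g (pow_pos one_half_pos (k+1))
    have hSne : {n | (Γ t ∩ closedBall (d n) ((1/2 : ℝ) ^ (k+1)) ∩
        closedBall (d (v k t)) ((1/2 : ℝ) ^ k)).Nonempty}.Nonempty :=
      ⟨n, g, ⟨hgΓ, by simpa [mem_closedBall, dist_comm] using hn.le⟩, hgB⟩
    have hmem := Nat.sInf_mem hSne
    rw [← hvs] at hmem
    obtain ⟨g', ⟨-, hg'1⟩, hg'2⟩ := hmem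
    calc dist (d (v (k+1) t)) (d (v k t)) ≤ dist (d (v (k+1) t)) g' + dist g' (d (v k t)) :=
          dist_triangle _ _ _
      _ ≤ (1/2 : ℝ) ^ (k+1) + (1/2 : ℝ) ^ k := by
          refine add_le_add ?_ hg'2
          rw [dist_comm]; exact hg'1
      _ = (3/2) * (1/2 : ℝ) ^ k := by ring
  -- measurability of v k
  have hballmeas : ∀ (c : E) (r : ℝ) (c' : E) (r' : ℝ),
      MeasurableSet {t | (Γ t ∩ closedBall c r ∩ closedBall c' r').Nonempty} := by
    intro c r c' r'
    have heq : {t | (Γ t ∩ closedBall c r ∩ closedBall c' r').Nonempty} =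
        {t | (Γ t ∩ (closedBall c r ∩ closedBall c' r')).Nonempty} := by
      simp [inter_assoc]
    rw [heq]
    exact hmeas _ (Metric.isClosed_closedBall.inter Metric.isClosed_closedBall)
      (isBounded_closedBall.subset inter_subset_left)
  have hvmeas : ∀ k, Measurable (v k) := by
    intro k
    induction k with
    | zero =>
      exact measurable_sInf_setOf fun n => hmeas _ Metric.isClosed_closedBall isBounded_closedBall
    | succ k ih =>
      have hfix : ∀ j : ℕ, Measurable fun t =>
          sInf {n | (Γ t ∩ closedBall (d n) ((1/2 : ℝ) ^ (k+1)) ∩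
            closedBall (d j) ((1/2 : ℝ) ^ k)).Nonempty} :=
        fun j => measurable_sInf_setOf fun n => hballmeas _ _ _ _
      apply measurable_to_countable'
      intro i
      have hset : (v (k+1)) ⁻¹' {i} = ⋃ j, ((v k) ⁻¹' {j}) ∩
          ((fun t => sInf {n | (Γ t ∩ closedBall (d n) ((1/2 : ℝ) ^ (k+1)) ∩
            closedBall (d j) ((1/2 : ℝ) ^ k)).Nonempty}) ⁻¹' {i}) := by
        ext t
        simp only [mem_preimage, mem_singleton_iff, mem_iUnion, mem_inter_iff]
        constructor
        · intro h
          exact ⟨v k t, rfl, by rw [← h, hvs]⟩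
        · rintro ⟨j, hj, h⟩
          rw [hvs, hj]
          exact h
      rw [hset]
      exact MeasurableSet.iUnion fun j => (ih (measurableSet_singleton j)).inter
        ((hfix j) (measurableSet_singleton i))
  set u : ℕ → α → E := fun k t => d (v k t) with hu_def
  have humeas : ∀ k, Measurable (u k) := fun k => measurable_from_top.comp (hvmeas k)
  have hcau : ∀ t, CauchySeq fun k => u k t := by
    intro t
    apply cauchySeq_of_le_geometric (1/2 : ℝ) (3/2) (by norm_num)
    intro k
    rw [dist_comm]
    exact hdist k t
  choose σ hσ using fun t => cauchySeq_tendsto_of_complete (hcau t)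
  have hσmeas : Measurable σ :=
    measurable_of_tendsto_metrizable humeas (tendsto_pi_nhds.mpr hσ)
  refine ⟨σ, hσmeas, fun t => ?_⟩
  rw [← (hcl t).closure_eq, Metric.mem_closure_iff]
  intro ε hε
  have h1 : Tendsto (fun k => dist (σ t) (u k t)) atTop (𝓝 0) := by
    have := (tendsto_const_nhds (x := σ t) (f := atTop (α := ℕ))).dist (hσ t)
    simpa using this
  have h2 : Tendsto (fun k => (1/2 : ℝ) ^ k) atTop (𝓝 0) :=
    tendsto_pow_atTop_nhds_zero_of_lt_one (by norm_num) (by norm_num)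
  have h3 : Tendsto (fun k => dist (σ t) (u k t) + (1/2 : ℝ) ^ k) atTop (𝓝 0) := by
    simpa using h1.add h2
  obtain ⟨k, hk⟩ := (h3.eventually (eventually_lt_nhds hε)).exists
  obtain ⟨g, hgΓ, hgB⟩ := key k t
  refine ⟨g, hgΓ, ?_⟩
  calc dist (σ t) g ≤ dist (σ t) (u k t) + dist (u k t) g := dist_triangle _ _ _
    _ ≤ dist (σ t) (u k t) + (1/2 : ℝ) ^ k := by
        refine add_le_add le_rfl ?_
        rw [dist_comm]; exact hgB
    _ < ε := hk

theorem exists_castaing {Γ : α → Set E}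
    (hne : ∀ t, (Γ t).Nonempty) (hcl : ∀ t, IsClosed (Γ t))
    (hmeas : ∀ F : Set E, IsClosed F → Bornology.IsBounded F →
      MeasurableSet {t | (Γ t ∩ F).Nonempty}) :
    ∃ σ : ℕ × ℕ → α → E, (∀ i, Measurable (σ i)) ∧ (∀ i t, σ i t ∈ Γ t) ∧
      ∀ t, ∀ z ∈ Γ t, ∀ ε > 0, ∃ i, dist (σ i t) z < ε := by
  classical
  set d : ℕ → E := TopologicalSpace.denseSeq E with hd_def
  have hd : DenseRange d := TopologicalSpace.denseRange_denseSeq E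
  set Λ : ℕ × ℕ → α → Set E := fun p t =>
    if (Γ t ∩ closedBall (d p.1) ((1/2 : ℝ) ^ p.2)).Nonempty then
      Γ t ∩ closedBall (d p.1) ((1/2 : ℝ) ^ p.2) else Γ t with hΛ_def
  have hΛne : ∀ p t, (Λ p t).Nonempty := by
    intro p t
    simp only [hΛ_def]
    split_ifs with h
    · exact h
    · exact hne t
  have hΛcl : ∀ p t, IsClosed (Λ p t) := by
    intro p t
    simp only [hΛ_def]
    split_ifs with h
    · exact (hcl t).inter Metric.isClosed_closedBall
    · exact hcl t
  have hΛsub : ∀ p t, Λ p t ⊆ Γ t := by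
    intro p t
    simp only [hΛ_def]
    split_ifs with h
    · exact inter_subset_left
    · exact le_rfl
  have hΛmeas : ∀ p, ∀ F : Set E, IsClosed F → Bornology.IsBounded F →
      MeasurableSet {t | (Λ p t ∩ F).Nonempty} := by
    intro p F hFcl hFbd
    set N := {t | (Γ t ∩ closedBall (d p.1) ((1/2 : ℝ) ^ p.2)).Nonempty} with hN_def
    have hNmeas : MeasurableSet N := hmeas _ Metric.isClosed_closedBall isBounded_closedBall
    have hset : {t | (Λ p t ∩ F).Nonempty} =
        (N ∩ {t | (Γ t ∩ (closedBall (d p.1) ((1/2 : ℝ) ^ p.2) ∩ F)).Nonempty}) ∪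
        (Nᶜ ∩ {t | (Γ t ∩ F).Nonempty}) := by
      ext t
      simp only [mem_setOf_eq, hΛ_def, mem_union, mem_inter_iff, mem_compl_iff, hN_def]
      split_ifs with h
      · simp only [h, true_and, not_true, false_and, or_false]
        rw [inter_assoc]
      · simp only [h, false_and, not_false_iff, true_and, false_or]
    rw [hset]
    exact (hNmeas.inter (hmeas _ (Metric.isClosed_closedBall.inter hFcl)
        (hFbd.subset inter_subset_right))).union (hNmeas.compl.inter (hmeas _ hFcl hFbd))
  choose σ hσmeas hσmem using fun p =>
    exists_measurable_selection (hΛne p) (hΛcl p) (hΛmeas p)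
  refine ⟨σ, hσmeas, fun p t => hΛsub p t (hσmem p t), ?_⟩
  intro t z hz ε hε
  obtain ⟨j, hj⟩ := exists_pow_lt_of_lt_one (half_pos hε) (by norm_num : (1/2 : ℝ) < 1)
  obtain ⟨i, hi⟩ := hd.exists_dist_lt z (pow_pos one_half_pos j)
  have hzmem : z ∈ Γ t ∩ closedBall (d i) ((1/2 : ℝ) ^ j) :=
    ⟨hz, by simpa [mem_closedBall] using hi.le⟩
  have hcond : (Γ t ∩ closedBall (d i) ((1/2 : ℝ) ^ j)).Nonempty := ⟨z, hzmem⟩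
  have hmemij : σ (i, j) t ∈ Γ t ∩ closedBall (d i) ((1/2 : ℝ) ^ j) := by
    have := hσmem (i, j) t
    simpa only [hΛ_def, if_pos hcond] using this
  refine ⟨(i, j), ?_⟩
  calc dist (σ (i, j) t) z ≤ dist (σ (i, j) t) (d i) + dist (d i) z := dist_triangle _ _ _
    _ ≤ (1/2 : ℝ) ^ j + (1/2 : ℝ) ^ j := by
        refine add_le_add hmemij.2 ?_
        rw [dist_comm]; exact hi.le
    _ < ε := by linarith

end Stmt19Aux

open Stmt19Aux in
/-- Filippov measurable selection for the controlled ODE: if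
`U : [0,T] ⇝ ℝᵐ` is a measurable multifunction with closed values, `f` is jointly
measurable and continuous in `u` for a.e. `t`, and the absolutely continuous curve `x`
satisfies `ẋ(t) ∈ f(t, x(t), U(t))` a.e. on `[s,T]`, then there is a measurable
control `u` with `u(t) ∈ U(t)` and `ẋ(t) = f(t, x(t), u(t))` a.e. on `[s,T]`. -/
theorem stmt_19 {n m : ℕ} (s T : ℝ) (hsT : s ≤ T)
    (U : ℝ → Set (EuclideanSpace ℝ (Fin m)))
    (hUne : ∀ t, (U t).Nonempty)
    (hUclosed : ∀ t, IsClosed (U t))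
    (hUmeas : ∀ F : Set (EuclideanSpace ℝ (Fin m)), IsClosed F →
      MeasurableSet {t : ℝ | (U t ∩ F).Nonempty})
    (f : ℝ → EuclideanSpace ℝ (Fin n) → EuclideanSpace ℝ (Fin m) →
      EuclideanSpace ℝ (Fin n))
    (hfmeas : Measurable fun q : ℝ × EuclideanSpace ℝ (Fin n) × EuclideanSpace ℝ (Fin m) =>
      f q.1 q.2.1 q.2.2)
    (hfcont : ∀ᵐ t ∂(volume.restrict (Icc s T)),
      ∀ x : EuclideanSpace ℝ (Fin n), Continuous fun u => f t x u)
    (x x' : ℝ → EuclideanSpace ℝ (Fin n))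
    (hx : ∀ᵐ t ∂(volume.restrict (Icc s T)),
      HasDerivAt x (x' t) t ∧ x' t ∈ (fun u => f t (x t) u) '' U t) :
    ∃ u : ℝ → EuclideanSpace ℝ (Fin m), Measurable u ∧
      ∀ᵐ t ∂(volume.restrict (Icc s T)), u t ∈ U t ∧ x' t = f t (x t) (u t) := by
  classical
  set μ := volume.restrict (Icc s T) with hμ_def
  have hIccMeas : MeasurableSet (Icc s T) := measurableSet_Icc
  -- Step 1: a measurable a.e.-version `xt` of `x` on `Icc s T`
  have hxae : ∀ᵐ t ∂μ, HasDerivAt x (x' t) t := hx.mono fun t h => h.1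
  set B1 := toMeasurable μ {t | ¬ HasDerivAt x (x' t) t} with hB1_def
  have hB1meas : MeasurableSet B1 := measurableSet_toMeasurable μ _
  have hB1null : μ B1 = 0 := by
    rw [hB1_def, measure_toMeasurable]
    exact hxae
  set A1 := Icc s T \ B1 with hA1_def
  have hA1meas : MeasurableSet A1 := hIccMeas.diff hB1meas
  have hA1deriv : ∀ t ∈ A1, HasDerivAt x (x' t) t := by
    intro t ht
    by_contra h
    exact ht.2 (subset_toMeasurable μ _ h)
  have hxcont : ContinuousOn x A1 := fun t ht =>
    ((hA1deriv t ht).continuousAt).continuousWithinAt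
  have hA1eq : A1 =ᵐ[volume] Icc s T := by
    rw [MeasureTheory.ae_eq_set]
    constructor
    · have h0 : A1 \ Icc s T = ∅ := diff_eq_empty.mpr diff_subset
      rw [h0]; exact measure_empty
    · have hsub : Icc s T \ A1 ⊆ B1 ∩ Icc s T := by
        intro t ht
        rcases ht with ⟨htIcc, htA⟩
        refine ⟨?_, htIcc⟩
        by_contra hB
        exact htA ⟨htIcc, hB⟩
      refine measure_mono_null hsub ?_
      have := hB1null
      rwa [hμ_def, Measure.restrict_apply hB1meas] at this
  have hxAE : AEMeasurable x μ := by
    have h1 : AEMeasurable x (volume.restrict A1) := hxcont.aemeasurable hA1meas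
    rwa [Measure.restrict_congr_set hA1eq] at h1
  set xt := hxAE.mk x with hxt_def
  have hxtmeas : Measurable xt := hxAE.measurable_mk
  have hxteq : x =ᵐ[μ] xt := hxAE.ae_eq_mk
  -- Step 2: a measurable a.e.-version `yt` of `x'` on `Icc s T`
  have hNnull : volume ({t | ¬ x t = xt t} ∩ Icc s T) = 0 := by
    have h1 : μ {t | ¬ x t = xt t} = 0 := hxteq
    rwa [hμ_def, Measure.restrict_apply' hIccMeas] at h1
  set g : ℕ → ℝ → EuclideanSpace ℝ (Fin n) :=
    fun k t => (((k : ℝ) + 1)) • (xt (t + ((k : ℝ) + 1)⁻¹) - xt t) with hg_def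
  have hgmeas : ∀ k, Measurable (g k) := by
    intro k
    exact ((hxtmeas.comp (measurable_id.add_const _)).sub hxtmeas).const_smul ((k : ℝ) + 1)
  have hshift : ∀ k : ℕ, ∀ᵐ t ∂volume,
      t + ((k : ℝ) + 1)⁻¹ ∉ ({t | ¬ x t = xt t} ∩ Icc s T) := by
    intro k
    have h1 := (measurePreserving_add_right volume
      (((k : ℝ) + 1)⁻¹)).quasiMeasurePreserving.preimage_null hNnull
    rw [ae_iff]
    refine measure_mono_null (fun a ha => ?_) h1
    exact not_not.mp ha
  have hTae : ∀ᵐ t ∂μ, t < T := by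
    rw [ae_iff, hμ_def, Measure.restrict_apply' hIccMeas]
    have hsub : {a : ℝ | ¬ a < T} ∩ Icc s T ⊆ {T} := by
      rintro a ⟨ha, hIcc⟩
      simp only [mem_singleton_iff]
      exact le_antisymm hIcc.2 (not_lt.mp ha)
    exact measure_mono_null hsub Real.volume_singleton
  have htend : ∀ᵐ t ∂μ, Tendsto (fun k => g k t) atTop (𝓝 (x' t)) := by
    have hshift' : ∀ᵐ t ∂μ, ∀ k : ℕ,
        t + ((k : ℝ) + 1)⁻¹ ∉ ({t | ¬ x t = xt t} ∩ Icc s T) :=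
      ae_restrict_of_ae (ae_all_iff.mpr hshift)
    filter_upwards [hxae, hxteq, ae_restrict_mem hIccMeas, hshift', hTae]
      with t hderiv heq htIcc hsh htT
    have h0 : Tendsto (fun k : ℕ => t + ((k : ℝ) + 1)⁻¹) atTop (𝓝[≠] t) := by
      rw [tendsto_nhdsWithin_iff]
      constructor
      · have : Tendsto (fun k : ℕ => ((k : ℝ) + 1)⁻¹) atTop (𝓝 0) := by
          have := tendsto_one_div_add_atTop_nhds_zero_nat (𝕜 := ℝ)
          simpa [one_div] using this
        simpa using (tendsto_const_nhds (x := t)).add this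
      · refine Eventually.of_forall fun k => ?_
        simp only [mem_compl_iff, mem_singleton_iff]
        have : (0 : ℝ) < ((k : ℝ) + 1)⁻¹ := by positivity
        intro hcontra
        nlinarith [hcontra]
    have h1 := (hasDerivAt_iff_tendsto_slope.mp hderiv).comp h0
    refine h1.congr' ?_
    have hev : ∀ᶠ k : ℕ in atTop, ((k : ℝ) + 1)⁻¹ < T - t := by
      have : Tendsto (fun k : ℕ => ((k : ℝ) + 1)⁻¹) atTop (𝓝 0) := by
        have := tendsto_one_div_add_atTop_nhds_zero_nat (𝕜 := ℝ)
        simpa [one_div] using this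
      exact this.eventually (eventually_lt_nhds (by linarith))
    filter_upwards [hev] with k hk
    have hpos : (0 : ℝ) < ((k : ℝ) + 1)⁻¹ := by positivity
    have hmem : t + ((k : ℝ) + 1)⁻¹ ∈ Icc s T := ⟨by linarith [htIcc.1], by linarith⟩
    have hx1 : x (t + ((k : ℝ) + 1)⁻¹) = xt (t + ((k : ℝ) + 1)⁻¹) := by
      have := hsh k
      by_contra hne'
      exact this ⟨hne', hmem⟩
    show slope x t (t + ((k : ℝ) + 1)⁻¹) = g k t
    rw [slope_def_module]
    simp only [hg_def]
    rw [← hx1, ← heq]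
    congr 1
    · rw [add_sub_cancel_left, inv_inv]
  have hy'AE : AEMeasurable x' μ :=
    aemeasurable_of_tendsto_metrizable_ae atTop (fun k => (hgmeas k).aemeasurable) htend
  set yt := hy'AE.mk x' with hyt_def
  have hytmeas : Measurable yt := hy'AE.measurable_mk
  have hyteq : x' =ᵐ[μ] yt := hy'AE.ae_eq_mk
  -- Step 3: the good set `A2`
  set P : ℝ → Prop := fun t => x t = xt t ∧ x' t = yt t ∧
    (∀ xx, Continuous fun u => f t xx u) ∧ x' t ∈ (fun u => f t (x t) u) '' U t with hP_def
  have hPae : ∀ᵐ t ∂μ, P t := by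
    filter_upwards [hxteq, hyteq, hfcont, hx] with t h1 h2 h3 h4
    exact ⟨h1, h2, h3, h4.2⟩
  set B2 := toMeasurable μ {t | ¬ P t} with hB2_def
  have hB2meas : MeasurableSet B2 := measurableSet_toMeasurable μ _
  have hB2null : μ B2 = 0 := by
    rw [hB2_def, measure_toMeasurable]
    exact hPae
  set A2 := Icc s T \ B2 with hA2_def
  have hA2meas : MeasurableSet A2 := hIccMeas.diff hB2meas
  have hA2P : ∀ t ∈ A2, P t := by
    intro t ht
    by_contra h
    exact ht.2 (subset_toMeasurable μ _ h)
  have hA2ae : ∀ᵐ t ∂μ, t ∈ A2 := by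
    have h1 : ∀ᵐ t ∂μ, t ∈ Icc s T := ae_restrict_mem hIccMeas
    have h2 : ∀ᵐ t ∂μ, t ∉ B2 := by
      rw [ae_iff]
      simpa using hB2null
    filter_upwards [h1, h2] with t h1 h2
    exact ⟨h1, h2⟩
  -- Step 4: the multifunction Γ and its properties
  set Γ : ℝ → Set (EuclideanSpace ℝ (Fin m)) := fun t =>
    if t ∈ A2 then {u | u ∈ U t ∧ f t (xt t) u = yt t} else U t with hΓ_def
  have hΓsubU : ∀ t, Γ t ⊆ U t := by
    intro t
    simp only [hΓ_def]
    split_ifs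
    · exact fun u hu => hu.1
    · exact le_rfl
  have hΓA2 : ∀ t ∈ A2, Γ t = {u | u ∈ U t ∧ f t (xt t) u = yt t} := by
    intro t ht
    simp only [hΓ_def, if_pos ht]
  have hΓ0ne : ∀ t ∈ A2, ({u | u ∈ U t ∧ f t (xt t) u = yt t} :
      Set (EuclideanSpace ℝ (Fin m))).Nonempty := by
    intro t ht
    obtain ⟨hxeq, hyeq, hcont, u0, hu0U, hu0⟩ := hA2P t ht
    have hu0' : f t (x t) u0 = x' t := hu0
    exact ⟨u0, hu0U, by rw [← hxeq, hu0', ← hyeq]⟩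
  have hΓne : ∀ t, (Γ t).Nonempty := by
    intro t
    by_cases ht : t ∈ A2
    · rw [hΓA2 t ht]; exact hΓ0ne t ht
    · simp only [hΓ_def, if_neg ht]; exact hUne t
  have hΓcl : ∀ t, IsClosed (Γ t) := by
    intro t
    by_cases ht : t ∈ A2
    · rw [hΓA2 t ht]
      have hcont : Continuous fun u => f t (xt t) u := (hA2P t ht).2.2.1 (xt t)
      have : {u | u ∈ U t ∧ f t (xt t) u = yt t} =
          U t ∩ (fun u => f t (xt t) u) ⁻¹' {yt t} := by
        ext u; simp [mem_preimage]
      rw [this]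
      exact (hUclosed t).inter (isClosed_singleton.preimage hcont)
    · simp only [hΓ_def, if_neg ht]; exact hUclosed t
  -- measurability of Γ on closed bounded test sets
  have hΓmeas : ∀ F : Set (EuclideanSpace ℝ (Fin m)), IsClosed F → Bornology.IsBounded F →
      MeasurableSet {t | (Γ t ∩ F).Nonempty} := by
    intro F hFcl hFbd
    -- the auxiliary multifunction V = U ∩ F (or U if empty), with a Castaing representation
    set V : ℝ → Set (EuclideanSpace ℝ (Fin m)) := fun t =>
      if (U t ∩ F).Nonempty then U t ∩ F else U t with hV_def
    have hVne : ∀ t, (V t).Nonempty := by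
      intro t; simp only [hV_def]; split_ifs with h
      · exact h
      · exact hUne t
    have hVcl : ∀ t, IsClosed (V t) := by
      intro t; simp only [hV_def]; split_ifs with h
      · exact (hUclosed t).inter hFcl
      · exact hUclosed t
    have hVmeas : ∀ C : Set (EuclideanSpace ℝ (Fin m)), IsClosed C → Bornology.IsBounded C →
        MeasurableSet {t | (V t ∩ C).Nonempty} := by
      intro C hCcl hCbd
      set N := {t | (U t ∩ F).Nonempty} with hN_def
      have hNmeas : MeasurableSet N := hUmeas F hFcl
      have hset : {t | (V t ∩ C).Nonempty} =
          (N ∩ {t | (U t ∩ (F ∩ C)).Nonempty}) ∪ (Nᶜ ∩ {t | (U t ∩ C).Nonempty}) := by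
        ext t
        simp only [mem_setOf_eq, hV_def, mem_union, mem_inter_iff, mem_compl_iff, hN_def]
        split_ifs with h
        · simp only [h, true_and, not_true, false_and, or_false]
          rw [inter_assoc]
        · simp only [h, false_and, not_false_iff, true_and, false_or]
      rw [hset]
      exact (hNmeas.inter (hUmeas _ (hFcl.inter hCcl))).union
        (hNmeas.compl.inter (hUmeas _ hCcl))
    obtain ⟨σ, hσmeas, hσmem, hσdense⟩ := exists_castaing hVne hVcl hVmeas
    -- measurable building blocks
    have hσfmeas : ∀ i, Measurable fun t => dist (f t (xt t) (σ i t)) (yt t) := by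
      intro i
      exact (hfmeas.comp (measurable_id.prodMk (hxtmeas.prodMk (hσmeas i)))).dist hytmeas
    -- the key characterization on A2
    have hkey : ∀ t ∈ A2, ((Γ t ∩ F).Nonempty ↔ ((U t ∩ F).Nonempty ∧
        ∀ k : ℕ, ∃ i, dist (f t (xt t) (σ i t)) (yt t) < 1 / ((k : ℝ) + 1))) := by
      intro t ht
      have hcont : Continuous fun u => f t (xt t) u := (hA2P t ht).2.2.1 (xt t)
      rw [hΓA2 t ht]
      constructor
      · rintro ⟨u0, ⟨hu0U, hu0eq⟩, hu0F⟩
        have hUF : (U t ∩ F).Nonempty := ⟨u0, hu0U, hu0F⟩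
        refine ⟨hUF, fun k => ?_⟩
        have hpos : (0 : ℝ) < 1 / ((k : ℝ) + 1) := by positivity
        obtain ⟨δ, hδpos, hδ⟩ := Metric.continuous_iff.mp hcont u0 _ hpos
        have hu0V : u0 ∈ V t := by
          simp only [hV_def, if_pos hUF]
          exact ⟨hu0U, hu0F⟩
        obtain ⟨i, hi⟩ := hσdense t u0 hu0V δ hδpos
        refine ⟨i, ?_⟩
        have := hδ (σ i t) hi
        rwa [hu0eq] at this
      · rintro ⟨hUF, hk⟩
        choose i hi using hk
        set w : ℕ → EuclideanSpace ℝ (Fin m) := fun k => σ (i k) t with hw_def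
        have hwmem : ∀ k, w k ∈ U t ∩ F := by
          intro k
          have := hσmem (i k) t
          simpa only [hV_def, if_pos hUF] using this
        have hKcomp : IsCompact (U t ∩ F) :=
          Metric.isCompact_of_isClosed_isBounded ((hUclosed t).inter hFcl)
            (hFbd.subset inter_subset_right)
        obtain ⟨a, haUF, φ, hφmono, hφtend⟩ := hKcomp.tendsto_subseq hwmem
        have htend1 : Tendsto (fun k => f t (xt t) (w (φ k))) atTop
            (𝓝 (f t (xt t) a)) := (hcont.tendsto a).comp hφtend
        have htend2 : Tendsto (fun k => f t (xt t) (w (φ k))) atTop (𝓝 (yt t)) := by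
          rw [tendsto_iff_dist_tendsto_zero]
          have hb : ∀ k, dist (f t (xt t) (w (φ k))) (yt t) ≤ 1 / ((k : ℝ) + 1) := by
            intro k
            refine le_trans (hi (φ k)).le ?_
            have hkφ : (k : ℝ) ≤ (φ k : ℝ) := Nat.cast_le.mpr hφmono.le_apply
            apply one_div_le_one_div_of_le (by positivity) (by linarith)
          refine squeeze_zero (fun k => dist_nonneg) hb ?_
          exact tendsto_one_div_add_atTop_nhds_zero_nat
        have hfa : f t (xt t) a = yt t := tendsto_nhds_unique htend1 htend2
        exact ⟨a, ⟨haUF.1, hfa⟩, haUF.2⟩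
    -- split the set
    have hset : {t | (Γ t ∩ F).Nonempty} =
        (A2 ∩ ({t | (U t ∩ F).Nonempty} ∩
          ⋂ k : ℕ, ⋃ i : ℕ × ℕ, {t | dist (f t (xt t) (σ i t)) (yt t) < 1 / ((k : ℝ) + 1)})) ∪
        (A2ᶜ ∩ {t | (U t ∩ F).Nonempty}) := by
      ext t
      simp only [mem_union, mem_inter_iff, mem_compl_iff, mem_setOf_eq, mem_iInter, mem_iUnion]
      by_cases ht : t ∈ A2
      · simp only [ht, true_and, not_true, false_and, or_false]
        rw [hkey t ht]
      · simp only [ht, false_and, not_false_iff, true_and, false_or]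
        simp only [hΓ_def, if_neg ht]
    rw [hset]
    refine ((hA2meas.inter ((hUmeas F hFcl).inter
      (MeasurableSet.iInter fun k => MeasurableSet.iUnion fun i => ?_))).union
      (hA2meas.compl.inter (hUmeas F hFcl)))
    exact measurableSet_lt (hσfmeas i) measurable_const
  -- Step 5: select and conclude
  obtain ⟨u, humeas, humem⟩ := exists_measurable_selection hΓne hΓcl hΓmeas
  refine ⟨u, humeas, ?_⟩
  filter_upwards [hA2ae] with t ht
  have hP := hA2P t ht
  have hmem := humem t
  rw [hΓA2 t ht] at hmem
  obtain ⟨hmemU, hmemf⟩ := hmem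
  refine ⟨hmemU, ?_⟩
  rw [hP.2.1, ← hmemf, hP.1]
end
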